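/- arXiv:2010.10598 — 3 statements merged into one kernel-verified Lean document; each statement's English description precedes it below -/
import Mathlib

section
/- Let (X_i)_{i∈ℤ} be a strictly stationary square-integrable real sequence with |Cov(X_0,X_j)| ≤ c(1+|j|)^{−a} for all j ∈ ℤ, for some c > 0 and a > 2. Let p_n = ⌊n^ζ⌋ for some ζ ∈ (1/3, 1) and k_n = ⌊n/p_n⌋. Then there exists a constant C > 0 such that for all n: Var(Σ_{i=1}^{k_n} Y_i^{(n)}) ≤ C k_n / p_n. -/
open MeasureTheory ProbabilityTheory Filter Topology

noncomputable section

variable {Ω : Type*} [MeasurableSpace Ω]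

/-- Covariance of two real-valued random variables. -/
def cov (P : Measure Ω) (f g : Ω → ℝ) : ℝ :=
  (∫ ω, f ω * g ω ∂P) - (∫ ω, f ω ∂P) * (∫ ω, g ω ∂P)

/-- Strict stationarity of a real-valued process indexed by `ℤ`: for every shift `k`, the
joint law of the shifted process coincides with that of the original process. -/
def IsStrictlyStationary (P : Measure Ω) (X : ℤ → Ω → ℝ) : Prop :=
  ∀ k : ℤ, Measure.map (fun ω => fun i : ℤ => X (i + k) ω) P
    = Measure.map (fun ω => fun i : ℤ => X i ω) P

/-- The process `X` is α-mixing with coefficients `α`. -/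
def IsAlphaMixingWith (P : Measure Ω) (X : ℤ → Ω → ℝ) (α : ℕ → ℝ) : Prop :=
  ∀ q : ℕ, 1 ≤ q → ∀ t : ℤ, ∀ A B : Set Ω,
    MeasurableSet[⨆ i ∈ {i : ℤ | i ≤ t}, MeasurableSpace.comap (X i) (borel ℝ)] A →
    MeasurableSet[⨆ i ∈ {i : ℤ | t + (q : ℤ) ≤ i}, MeasurableSpace.comap (X i) (borel ℝ)] B →
    |(P (A ∩ B)).toReal - (P A).toReal * (P B).toReal| ≤ α q

/-- The process `X` is θ-weakly dependent with coefficients `θ`: for separated monotone blocks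
of indices, any bounded measurable `f` of the past and any function `g` of the future that is
`L`-Lipschitz with respect to the ℓ¹-norm satisfy the covariance bound. -/
def IsThetaWeaklyDependentWith (P : Measure Ω) (X : ℤ → Ω → ℝ) (θ : ℕ → ℝ) : Prop :=
  ∀ (u v q : ℕ), 1 ≤ u → 1 ≤ v → 1 ≤ q →
    ∀ (i : Fin u → ℤ) (j : Fin v → ℤ), Monotone i → Monotone j →
    (∀ a b, i a + (q : ℤ) ≤ j b) →
    ∀ (f : (Fin u → ℝ) → ℝ) (g : (Fin v → ℝ) → ℝ) (Mf L : ℝ),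
      Measurable f → (∀ x, |f x| ≤ Mf) →
      (∀ x y, |g x - g y| ≤ L * ∑ a, |x a - y a|) →
      |cov P (fun ω => f fun a => X (i a) ω) (fun ω => g fun b => X (j b) ω)|
        ≤ (v : ℝ) * L * Mf * θ q

/-- The common mean `m = E[X₀]`. -/
def meanX (P : Measure Ω) (X : ℤ → Ω → ℝ) : ℝ := ∫ ω, X 0 ω ∂P

/-- The long-run variance `σ² = Σ_{j ∈ ℤ} Cov(X₀, X_j)`. -/
def sigma2 (P : Measure Ω) (X : ℤ → Ω → ℝ) : ℝ := ∑' j : ℤ, cov P (X 0) (X j)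

/-- Block mean `Y_i^{(n)}` over the Bernstein block `B_{i,n} = {(i-1)p+1, …, ip}`. -/
def blockY (X : ℤ → Ω → ℝ) (p i : ℕ) (ω : Ω) : ℝ :=
  (∑ j ∈ Finset.Icc ((i - 1) * p + 1) (i * p), X (j : ℤ) ω) / p

/-- Normalized centred block sum `G_{i,n} = √p (Y_i^{(n)} − m)`. -/
def blockG (P : Measure Ω) (X : ℤ → Ω → ℝ) (p i : ℕ) (ω : Ω) : ℝ :=
  Real.sqrt p * (blockY X p i ω - meanX P X)

/-- Centred squared block sum `U_{i,n} = G_{i,n}² − E[G_{i,n}²]`. -/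
def blockU (P : Measure Ω) (X : ℤ → Ω → ℝ) (p i : ℕ) (ω : Ω) : ℝ :=
  blockG P X p i ω ^ 2 - ∫ ω', blockG P X p i ω' ^ 2 ∂P

/-- The statistic `𝒢_n = (m²√k)⁻¹ Σ_{i=1}^{k} U_{i,n}`. -/
def calG (P : Measure Ω) (X : ℤ → Ω → ℝ) (p k : ℕ) (ω : Ω) : ℝ :=
  (∑ i ∈ Finset.Icc 1 k, blockU P X p i ω) / (meanX P X ^ 2 * Real.sqrt k)

/-- The fourth joint cumulant `κ(X_a, X_b, X_c, X_d)`. -/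
def cum4 (P : Measure Ω) (X : ℤ → Ω → ℝ) (a b c d : ℤ) : ℝ :=
  (∫ ω, (X a ω - meanX P X) * (X b ω - meanX P X) * (X c ω - meanX P X)
      * (X d ω - meanX P X) ∂P)
    - cov P (X a) (X b) * cov P (X c) (X d)
    - cov P (X a) (X c) * cov P (X b) (X d)
    - cov P (X a) (X d) * cov P (X b) (X c)

/-- Condition (C): summability of the fourth cumulants
`Σ_{i,j,k=1}^∞ |κ(X₀, X_i, X_j, X_k)| < ∞`. -/
def CondC (P : Measure Ω) (X : ℤ → Ω → ℝ) : Prop :=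
  Summable (fun v : ℕ × ℕ × ℕ =>
    |cum4 P X 0 ((v.1 : ℤ) + 1) ((v.2.1 : ℤ) + 1) ((v.2.2 : ℤ) + 1)|)

/-- Convergence in distribution: weak convergence of the laws of `Z n` under `P`
to the limit measure `μLim`. -/
def TendstoInDistribution (P : Measure Ω) (Z : ℕ → Ω → ℝ) (μLim : Measure ℝ) : Prop :=
  ∀ F : BoundedContinuousFunction ℝ ℝ,
    Tendsto (fun n => ∫ ω, F (Z n ω) ∂P) atTop (𝓝 (∫ x, F x ∂μLim))

section Aux

variable (P : Measure Ω) (X : ℤ → Ω → ℝ)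

lemma pair_law (hX : ∀ i, Measurable (X i)) (hstat : IsStrictlyStationary P X) (s t : ℤ) :
    Measure.map (fun ω => (X s ω, X t ω)) P
      = Measure.map (fun ω => (X 0 ω, X (t - s) ω)) P := by
  have hφ : Measurable (fun f : ℤ → ℝ => (f 0, f (t - s))) :=
    (measurable_pi_apply 0).prodMk (measurable_pi_apply (t - s))
  have hshift : Measurable (fun ω => fun i : ℤ => X (i + s) ω) :=
    measurable_pi_lambda _ (fun _ => hX _)
  have horig : Measurable (fun ω => fun i : ℤ => X i ω) :=
    measurable_pi_lambda _ (fun _ => hX _)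
  have h1 : (fun ω => (X s ω, X t ω))
      = (fun f : ℤ → ℝ => (f 0, f (t - s))) ∘ (fun ω => fun i : ℤ => X (i + s) ω) := by
    funext ω; simp [Function.comp]
  have h2 : (fun ω => (X 0 ω, X (t - s) ω))
      = (fun f : ℤ → ℝ => (f 0, f (t - s))) ∘ (fun ω => fun i : ℤ => X i ω) := by
    funext ω; simp [Function.comp]
  rw [h1, h2, ← Measure.map_map hφ hshift, ← Measure.map_map hφ horig, hstat s]

lemma cov_via_map (hX : ∀ i, Measurable (X i)) (s t : ℤ) :
    cov P (X s) (X t)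
      = (∫ z : ℝ × ℝ, z.1 * z.2 ∂(Measure.map (fun ω => (X s ω, X t ω)) P))
        - (∫ z : ℝ × ℝ, z.1 ∂(Measure.map (fun ω => (X s ω, X t ω)) P))
          * (∫ z : ℝ × ℝ, z.2 ∂(Measure.map (fun ω => (X s ω, X t ω)) P)) := by
  have hm : Measurable (fun ω => (X s ω, X t ω)) := (hX s).prodMk (hX t)
  rw [integral_map (f := fun z : ℝ × ℝ => z.1 * z.2) hm.aemeasurable ((measurable_fst.mul measurable_snd).aestronglyMeasurable),
    integral_map hm.aemeasurable measurable_fst.aestronglyMeasurable,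
    integral_map hm.aemeasurable measurable_snd.aestronglyMeasurable]
  rfl

lemma cov_stationary (hX : ∀ i, Measurable (X i)) (hstat : IsStrictlyStationary P X)
    (s t : ℤ) : cov P (X s) (X t) = cov P (X 0) (X (t - s)) := by
  rw [cov_via_map P X hX s t, cov_via_map P X hX 0 (t - s),
    pair_law P X hX hstat s t]

lemma memLp_all (hX : ∀ i, Measurable (X i)) (hstat : IsStrictlyStationary P X)
    (hL2 : MemLp (X 0) 2 P) (t : ℤ) : MemLp (X t) 2 P := by
  have hlaw : Measure.map (X t) P = Measure.map (X 0) P := by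
    have hφ : Measurable (fun f : ℤ → ℝ => f 0) := measurable_pi_apply 0
    have hshift : Measurable (fun ω => fun i : ℤ => X (i + t) ω) :=
      measurable_pi_lambda _ (fun _ => hX _)
    have horig : Measurable (fun ω => fun i : ℤ => X i ω) :=
      measurable_pi_lambda _ (fun _ => hX _)
    have h1 : X t = (fun f : ℤ → ℝ => f 0) ∘ (fun ω => fun i : ℤ => X (i + t) ω) := by
      funext ω; simp
    have h2 : X 0 = (fun f : ℤ → ℝ => f 0) ∘ (fun ω => fun i : ℤ => X i ω) := rfl
    rw [h1, h2, ← Measure.map_map hφ hshift, ← Measure.map_map hφ horig, hstat t]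
  have h0 : MemLp (id : ℝ → ℝ) 2 (Measure.map (X 0) P) := by
    rw [memLp_map_measure_iff aestronglyMeasurable_id (hX 0).aemeasurable]
    simpa using hL2
  have ht : MemLp (id : ℝ → ℝ) 2 (Measure.map (X t) P) := hlaw ▸ h0
  simpa using (memLp_map_measure_iff aestronglyMeasurable_id (hX t).aemeasurable).mp ht

lemma cov_sum_sum [IsProbabilityMeasure P] (J : Finset ℕ) (f : ℕ → Ω → ℝ)
    (h1 : ∀ j, Integrable (f j) P)
    (h2 : ∀ j j', Integrable (fun ω => f j ω * f j' ω) P) :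
    cov P (fun ω => ∑ j ∈ J, f j ω) (fun ω => ∑ j ∈ J, f j ω)
      = ∑ j ∈ J, ∑ j' ∈ J, cov P (f j) (f j') := by
  unfold cov
  have hprod : (∫ ω, (∑ j ∈ J, f j ω) * (∑ j' ∈ J, f j' ω) ∂P)
      = ∑ j ∈ J, ∑ j' ∈ J, ∫ ω, f j ω * f j' ω ∂P := by
    have : ∀ ω, (∑ j ∈ J, f j ω) * (∑ j' ∈ J, f j' ω)
        = ∑ j ∈ J, ∑ j' ∈ J, f j ω * f j' ω := by
      intro ω; rw [Finset.sum_mul_sum]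
    simp_rw [this]
    rw [integral_finset_sum J (fun j _ => integrable_finset_sum J (fun j' _ => h2 j j'))]
    exact Finset.sum_congr rfl fun j _ => integral_finset_sum J (fun j' _ => h2 j j')
  rw [hprod, integral_finset_sum J (fun j _ => h1 j), Finset.sum_mul_sum]
  rw [← Finset.sum_sub_distrib]
  exact Finset.sum_congr rfl fun j _ => (Finset.sum_sub_distrib _ _).symm

end Aux

set_option maxHeartbeats 1000000 in
/-- variance bound for the sum of the block means. -/
theorem stmt11
    (P : Measure Ω) [IsProbabilityMeasure P]
    (X : ℤ → Ω → ℝ) (hXmeas : ∀ i, Measurable (X i))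
    (hstat : IsStrictlyStationary P X)
    (hL2 : MemLp (X 0) 2 P)
    (c a : ℝ) (hc : 0 < c) (ha : 2 < a)
    (hcov : ∀ j : ℤ, |cov P (X 0) (X j)| ≤ c * (1 + |(j : ℝ)|) ^ (-a))
    (ζ : ℝ) (hζ : 1 / 3 < ζ ∧ ζ < 1)
    (p : ℕ → ℕ) (hpdef : ∀ n, p n = ⌊(n : ℝ) ^ ζ⌋₊) :
    ∃ C : ℝ, 0 < C ∧ ∀ n : ℕ, 1 ≤ n →
      variance (fun ω => ∑ i ∈ Finset.Icc 1 (n / p n), blockY X (p n) i ω) P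
        ≤ C * ((n / p n : ℕ) : ℝ) / (p n : ℝ) := by
  classical
  set g : ℤ → ℝ := fun h => c * (1 + |(h : ℝ)|) ^ (-a) with hgdef
  have hgpos : ∀ h, 0 < g h := by
    intro h
    have h1 : (0:ℝ) < 1 + |(h:ℝ)| := by positivity
    exact mul_pos hc (Real.rpow_pos_of_pos h1 _)
  have hbase : Summable (fun n : ℕ => ((n:ℝ)) ^ (-a)) :=
    Real.summable_nat_rpow.2 (by linarith)
  have hsum_nat : Summable (fun n : ℕ => g n) := by
    have hshift : Summable (fun n : ℕ => (((n + 1 : ℕ) : ℝ)) ^ (-a)) :=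
      (summable_nat_add_iff 1).2 hbase
    refine (hshift.mul_left c).congr fun n => ?_
    simp only [hgdef]
    push_cast
    rw [abs_of_nonneg (by positivity), add_comm]
  have hsum_neg : Summable (fun n : ℕ => g (-(n + 1))) := by
    have hshift : Summable (fun n : ℕ => (((n + 2 : ℕ) : ℝ)) ^ (-a)) :=
      (summable_nat_add_iff 2).2 hbase
    refine (hshift.mul_left c).congr fun n => ?_
    simp only [hgdef]
    push_cast
    rw [abs_of_nonpos (by linarith [Nat.cast_nonneg (α := ℝ) n])]
    ring_nf
  have hg : Summable g := Summable.of_nat_of_neg_add_one hsum_nat hsum_neg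
  set S := ∑' h : ℤ, g h with hSdef
  have hSpos : 0 < S := by
    have h0 : g 0 ≤ S := Summable.le_tsum hg 0 fun h _ => (hgpos h).le
    have : g 0 = c := by simp [hgdef, Real.one_rpow]
    linarith
  refine ⟨S, hSpos, fun n hn => ?_⟩
  set pn := p n with hpn
  set k := n / p n with hk
  have hp1 : 1 ≤ pn := by
    rw [hpn, hpdef]
    refine Nat.le_floor ?_
    have : (1:ℝ) ≤ (n:ℝ) := by exact_mod_cast hn
    simpa using Real.one_le_rpow this (by linarith [hζ.1] : (0:ℝ) ≤ ζ)
  have hppos : (0:ℝ) < (pn : ℝ) := by exact_mod_cast hp1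
  have hMem : ∀ t : ℤ, MemLp (X t) 2 P := memLp_all P X hXmeas hstat hL2
  have h1 : ∀ t : ℤ, Integrable (X t) P := fun t => (hMem t).integrable one_le_two
  have h2 : ∀ s t : ℤ, Integrable (fun ω => X s ω * X t ω) P := by
    intro s t
    have hsm : MemLp ((X s) • (X t)) 1 P := by
      exact MemLp.smul (hMem t) (hMem s)
    exact memLp_one_iff_integrable.mp hsm
  set J := Finset.Ioc 0 (k * pn) with hJ
  set T := fun ω => ∑ j ∈ J, X (j : ℤ) ω with hT
  have hblock : (fun ω => ∑ i ∈ Finset.Icc 1 k, blockY X pn i ω) = ((pn:ℝ)⁻¹ • T) := by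
    funext ω
    have key : ∀ m : ℕ,
        ∑ i ∈ Finset.Icc 1 m, ∑ j ∈ Finset.Ioc ((i - 1) * pn) (i * pn), X (j:ℤ) ω
          = ∑ j ∈ Finset.Ioc 0 (m * pn), X (j:ℤ) ω := by
      intro m
      induction m with
      | zero => simp
      | succ m ih =>
        rw [Finset.sum_Icc_succ_top (Nat.one_le_iff_ne_zero.mpr (Nat.succ_ne_zero m)), ih]
        simp only [Nat.add_sub_cancel]
        exact Finset.sum_Ioc_consecutive _ (Nat.zero_le _)
          (Nat.mul_le_mul_right pn (Nat.le_succ m))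
    simp only [blockY, Pi.smul_apply, smul_eq_mul, hT, hJ]
    rw [← Finset.sum_div, inv_mul_eq_div]
    congr 1
    rw [← key k]
    exact Finset.sum_congr rfl fun i _ => by rw [Finset.Icc_add_one_left_eq_Ioc]
  rw [hblock, variance_smul]
  have hT2 : MemLp T 2 P := memLp_finset_sum J (fun j _ => hMem j)
  have hvar : variance T P = ∑ j ∈ J, ∑ j' ∈ J, cov P (X (j:ℤ)) (X (j':ℤ)) := by
    rw [variance_eq_sub hT2, ← cov_sum_sum P J (fun j => X (j:ℤ)) (fun j => h1 _)
      (fun j j' => h2 _ _)]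
    simp only [cov, hT]
    congr 1
    · exact integral_congr_ae (Eventually.of_forall fun ω => by simp [sq])
    · rw [sq]
  have hbound : variance T P ≤ (k * pn : ℕ) * S := by
    rw [hvar]
    have inner : ∀ j ∈ J, ∑ j' ∈ J, cov P (X (j:ℤ)) (X (j':ℤ)) ≤ S := by
      intro j _
      have step1 : ∑ j' ∈ J, cov P (X (j:ℤ)) (X (j':ℤ))
          ≤ ∑ j' ∈ J, g ((j':ℤ) - (j:ℤ)) := by
        refine Finset.sum_le_sum fun j' _ => ?_
        have := hcov ((j':ℤ) - (j:ℤ))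
        rw [← cov_stationary P X hXmeas hstat (j:ℤ) (j':ℤ)] at this
        exact le_trans (le_abs_self _) this
      have step2 : ∑ j' ∈ J, g ((j':ℤ) - (j:ℤ))
          = ∑ h ∈ J.image (fun j' : ℕ => (j':ℤ) - (j:ℤ)), g h := by
        rw [Finset.sum_image]
        intro x _ y _ hxy
        have : (x:ℤ) = (y:ℤ) := by linarith [sub_left_inj.mp hxy]
        exact_mod_cast this
      have step3 : ∑ h ∈ J.image (fun j' : ℕ => (j':ℤ) - (j:ℤ)), g h ≤ S :=
        Summable.sum_le_tsum _ (fun h _ => (hgpos h).le) hg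
      linarith
    calc ∑ j ∈ J, ∑ j' ∈ J, cov P (X (j:ℤ)) (X (j':ℤ))
        ≤ ∑ _j ∈ J, S := Finset.sum_le_sum inner
      _ = (J.card : ℝ) * S := by rw [Finset.sum_const, nsmul_eq_mul]
      _ = (k * pn : ℕ) * S := by rw [hJ, Nat.card_Ioc]; norm_num
  calc ((pn:ℝ)⁻¹) ^ 2 * variance T P
      ≤ ((pn:ℝ)⁻¹) ^ 2 * ((k * pn : ℕ) * S) := by
        exact mul_le_mul_of_nonneg_left hbound (by positivity)
    _ = S * (k : ℝ) / (pn : ℝ) := by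
        push_cast
        field_simp
end
end

section
/- Let (X_i)_{i∈ℤ} be a strictly stationary square-integrable real sequence with |Cov(X_0,X_j)| ≤ c(1+|j|)^{−a} for all j ∈ ℤ, for some c > 0 and a > 2. For integers 1 ≤ q_n < p_n ≤ n with k_n = ⌊n/p_n⌋, define Y_− = p_n^{−1} Σ_{i=1}^{p_n−q_n} X_i and, for ℓ ≥ 1, Y_ℓ^{(n)} = p_n^{−1} Σ_{j=ℓ p_n + 1}^{(ℓ+1)p_n} X_j. Then there exists a constant C > 0, depending only on c and a, such that for all n: Σ_{ℓ=1}^{k_n} |Cov(Y_−, Y_ℓ^{(n)})| ≤ C / p_n. -/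
open MeasureTheory ProbabilityTheory Filter Topology

noncomputable section

variable {Ω : Type*} [MeasurableSpace Ω]

/-- Mean over the first `p − q` observations of the initial block,
`Y_− = p⁻¹ Σ_{i=1}^{p−q} X_i`. -/
def Yminus (X : ℤ → Ω → ℝ) (p q : ℕ) (ω : Ω) : ℝ :=
  (∑ i ∈ Finset.Icc 1 (p - q), X (i : ℤ) ω) / p

/-- The `ℓ`-th shifted block mean `Y_ℓ^{(n)} = p⁻¹ Σ_{j=ℓp+1}^{(ℓ+1)p} X_j`. -/
def Yshift (X : ℤ → Ω → ℝ) (p ℓ : ℕ) (ω : Ω) : ℝ :=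
  (∑ j ∈ Finset.Icc (ℓ * p + 1) ((ℓ + 1) * p), X (j : ℤ) ω) / p


private lemma pair_identDistrib
    (P : Measure Ω) (X : ℤ → Ω → ℝ) (hXmeas : ∀ i, Measurable (X i))
    (hstat : IsStrictlyStationary P X) (i j : ℤ) :
    IdentDistrib (fun ω => (X i ω, X j ω)) (fun ω => (X 0 ω, X (j - i) ω)) P P := by
  have hT : Measurable (fun ω => fun m : ℤ => X m ω) := measurable_pi_lambda _ hXmeas
  have hT' : Measurable (fun ω => fun m : ℤ => X (m + i) ω) :=
    measurable_pi_lambda _ fun m => hXmeas _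
  have hπ : Measurable (fun f : ℤ → ℝ => (f 0, f (j - i))) :=
    (measurable_pi_apply 0).prodMk (measurable_pi_apply _)
  refine ⟨((hXmeas i).prodMk (hXmeas j)).aemeasurable,
    ((hXmeas 0).prodMk (hXmeas (j - i))).aemeasurable, ?_⟩
  have h1 : (fun f : ℤ → ℝ => (f 0, f (j - i))) ∘ (fun ω => fun m : ℤ => X (m + i) ω)
      = fun ω => (X i ω, X j ω) := by
    funext ω
    show (X (0 + i) ω, X (j - i + i) ω) = (X i ω, X j ω)
    rw [show (0 : ℤ) + i = i by ring, show j - i + i = j by ring]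
  have h2 : (fun f : ℤ → ℝ => (f 0, f (j - i))) ∘ (fun ω => fun m : ℤ => X m ω)
      = fun ω => (X 0 ω, X (j - i) ω) := rfl
  calc Measure.map (fun ω => (X i ω, X j ω)) P
      = Measure.map (fun f : ℤ → ℝ => (f 0, f (j - i)))
          (Measure.map (fun ω => fun m : ℤ => X (m + i) ω) P) := by
        rw [Measure.map_map hπ hT', h1]
    _ = Measure.map (fun f : ℤ → ℝ => (f 0, f (j - i)))
          (Measure.map (fun ω => fun m : ℤ => X m ω) P) := by rw [hstat i]
    _ = Measure.map (fun ω => (X 0 ω, X (j - i) ω)) P := by rw [Measure.map_map hπ hT, h2]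

private lemma memL2_all
    (P : Measure Ω) (X : ℤ → Ω → ℝ) (hXmeas : ∀ i, Measurable (X i))
    (hstat : IsStrictlyStationary P X) (hL2 : MemLp (X 0) 2 P) (i : ℤ) :
    MemLp (X i) 2 P := by
  have h := (pair_identDistrib P X hXmeas hstat i i).comp
    (measurable_fst (α := ℝ) (β := ℝ))
  exact h.symm.memLp_snd hL2

private lemma cov_shift
    (P : Measure Ω) (X : ℤ → Ω → ℝ)
    (hXmeas : ∀ i, Measurable (X i)) (hstat : IsStrictlyStationary P X) (i j : ℤ) :
    cov P (X i) (X j) = cov P (X 0) (X (j - i)) := by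
  have h := pair_identDistrib P X hXmeas hstat i j
  have h1 := (h.comp (measurable_fst.mul measurable_snd)).integral_eq
  have h2 := (h.comp (measurable_fst (α := ℝ) (β := ℝ))).integral_eq
  have h3 := (h.comp (measurable_snd (α := ℝ) (β := ℝ))).integral_eq
  simp only [Function.comp, Pi.mul_apply] at h1 h2 h3
  simp only [cov]
  rw [h1, h2, h3]

private lemma cov_sum_div
    (P : Measure Ω) [IsProbabilityMeasure P] (s t : Finset ℕ)
    (f g : ℕ → Ω → ℝ) (r : ℝ)
    (hf : ∀ i ∈ s, MemLp (f i) 2 P) (hg : ∀ j ∈ t, MemLp (g j) 2 P) :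
    cov P (fun ω => (∑ i ∈ s, f i ω) / r) (fun ω => (∑ j ∈ t, g j ω) / r)
      = (∑ i ∈ s, ∑ j ∈ t, cov P (f i) (g j)) / r ^ 2 := by
  have hintf : ∀ i ∈ s, Integrable (f i) P := fun i hi => (hf i hi).integrable one_le_two
  have hintg : ∀ j ∈ t, Integrable (g j) P := fun j hj => (hg j hj).integrable one_le_two
  have hmul : ∀ i ∈ s, ∀ j ∈ t, Integrable (fun ω => f i ω * g j ω) P := by
    intro i hi j hj
    have h := (hg j hj).smul (φ := f i) (r := 1) (hf i hi)
    rw [memLp_one_iff_integrable] at h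
    exact h
  simp only [cov]
  have e1 : (∫ ω, ((∑ i ∈ s, f i ω) / r) * ((∑ j ∈ t, g j ω) / r) ∂P)
      = (∑ i ∈ s, ∑ j ∈ t, ∫ ω, f i ω * g j ω ∂P) / r ^ 2 := by
    have hpt : ∀ ω, ((∑ i ∈ s, f i ω) / r) * ((∑ j ∈ t, g j ω) / r)
        = (∑ i ∈ s, ∑ j ∈ t, f i ω * g j ω) / r ^ 2 := by
      intro ω
      rw [div_mul_div_comm, Finset.sum_mul_sum, sq]
    simp_rw [hpt]
    rw [integral_div, integral_finset_sum _ (fun i hi =>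
      integrable_finset_sum _ (fun j hj => hmul i hi j hj))]
    congr 1
    exact Finset.sum_congr rfl fun i hi =>
      integral_finset_sum _ (fun j hj => hmul i hi j hj)
  have e2 : (∫ ω, (∑ i ∈ s, f i ω) / r ∂P) = (∑ i ∈ s, ∫ ω, f i ω ∂P) / r := by
    rw [integral_div, integral_finset_sum _ hintf]
  have e3 : (∫ ω, (∑ j ∈ t, g j ω) / r ∂P) = (∑ j ∈ t, ∫ ω, g j ω ∂P) / r := by
    rw [integral_div, integral_finset_sum _ hintg]
  have e4 : (∑ i ∈ s, ∑ j ∈ t, ((∫ ω, f i ω * g j ω ∂P)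
        - (∫ ω, f i ω ∂P) * ∫ ω, g j ω ∂P))
      = (∑ i ∈ s, ∑ j ∈ t, ∫ ω, f i ω * g j ω ∂P)
        - (∑ i ∈ s, ∫ ω, f i ω ∂P) * (∑ j ∈ t, ∫ ω, g j ω ∂P) := by
    rw [Finset.sum_mul_sum, ← Finset.sum_sub_distrib]
    exact Finset.sum_congr rfl fun i _ => Finset.sum_sub_distrib _ _
  rw [e1, e2, e3, e4]
  ring

/-- summed covariance bound between `Y_−` and the shifted block means. -/
theorem stmt12
    (P : Measure Ω) [IsProbabilityMeasure P]
    (X : ℤ → Ω → ℝ) (hXmeas : ∀ i, Measurable (X i))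
    (hstat : IsStrictlyStationary P X)
    (hL2 : MemLp (X 0) 2 P)
    (c a : ℝ) (hc : 0 < c) (ha : 2 < a)
    (hcov : ∀ j : ℤ, |cov P (X 0) (X j)| ≤ c * (1 + |(j : ℝ)|) ^ (-a))
    (p q : ℕ → ℕ)
    (hpq : ∀ n, 1 ≤ n → 1 ≤ q n ∧ q n < p n ∧ p n ≤ n) :
    ∃ C : ℝ, 0 < C ∧ ∀ n : ℕ, 1 ≤ n →
      ∑ ℓ ∈ Finset.Icc 1 (n / p n),
          |cov P (Yminus X (p n) (q n)) (Yshift X (p n) ℓ)|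
        ≤ C / p n := by
  classical
  have hL2' : ∀ i : ℤ, MemLp (X i) 2 P := memL2_all P X hXmeas hstat hL2
  have hcov' : ∀ i j : ℤ, |cov P (X i) (X j)| ≤ c * (1 + |(j : ℝ) - (i : ℝ)|) ^ (-a) := by
    intro i j
    rw [cov_shift P X hXmeas hstat i j]
    have h := hcov (j - i)
    have hcast : ((j - i : ℤ) : ℝ) = (j : ℝ) - (i : ℝ) := by push_cast; ring
    rwa [hcast] at h
  set F : ℕ → ℝ := fun d => c * (1 + (d : ℝ)) ^ (-a) with hF
  have hFnonneg : ∀ d, 0 ≤ F d := fun d =>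
    mul_nonneg hc.le (Real.rpow_nonneg (by positivity) _)
  have hFsum : Summable F := by
    apply Summable.mul_left
    have h1 : Summable (fun n : ℕ => (n : ℝ) ^ (-a)) :=
      Real.summable_nat_rpow.mpr (by linarith)
    have h2 : Summable (fun d : ℕ => ((d + 1 : ℕ) : ℝ) ^ (-a)) :=
      (summable_nat_add_iff 1).mpr h1
    refine h2.congr fun d => ?_
    push_cast
    rw [add_comm]
  set S := ∑' d, F d with hSdef
  have hS0 : 0 ≤ S := tsum_nonneg hFnonneg
  refine ⟨S + 1, by linarith, ?_⟩
  intro n hn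
  obtain ⟨hq1, hqp, hpn⟩ := hpq n hn
  set p' := p n with hp'
  set q' := q n with hq'
  set k := n / p n with hk
  have hp1 : 1 ≤ p' := le_trans hq1 hqp.le
  have hp0 : (0 : ℝ) < (p' : ℝ) := by exact_mod_cast hp1
  -- the per-block covariance identity
  have hcovY : ∀ ℓ : ℕ, cov P (Yminus X p' q') (Yshift X p' ℓ)
      = (∑ i ∈ Finset.Icc 1 (p' - q'),
          ∑ j ∈ Finset.Icc (ℓ * p' + 1) ((ℓ + 1) * p'), cov P (X (i : ℤ)) (X (j : ℤ)))
        / (p' : ℝ) ^ 2 := by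
    intro ℓ
    have h := cov_sum_div P (Finset.Icc 1 (p' - q'))
      (Finset.Icc (ℓ * p' + 1) ((ℓ + 1) * p'))
      (fun i : ℕ => X (i : ℤ)) (fun j : ℕ => X (j : ℤ)) (p' : ℝ)
      (fun i _ => hL2' i) (fun j _ => hL2' j)
    exact h
  -- bound each |cov| term
  have hbound : ∀ ℓ ∈ Finset.Icc 1 k, ∀ i ∈ Finset.Icc 1 (p' - q'),
      ∀ j ∈ Finset.Icc (ℓ * p' + 1) ((ℓ + 1) * p'),
      |cov P (X (i : ℤ)) (X (j : ℤ))| ≤ F (j - i) := by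
    intro ℓ hℓ i hi j hj
    rw [Finset.mem_Icc] at hℓ hi hj
    have hℓ1 : 1 ≤ ℓ := hℓ.1
    have hpmul : p' ≤ ℓ * p' := Nat.le_mul_of_pos_left p' hℓ1
    have hij : i ≤ j := by omega
    have h := hcov' (i : ℤ) (j : ℤ)
    have hcast2 : ((i : ℤ) : ℝ) = (i : ℝ) := by push_cast; ring
    have hcast3 : ((j : ℤ) : ℝ) = (j : ℝ) := by push_cast; ring
    rw [hcast2, hcast3] at h
    refine h.trans_eq ?_
    have e1 : |(j : ℝ) - (i : ℝ)| = ((j - i : ℕ) : ℝ) := by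
      rw [Nat.cast_sub hij, abs_of_nonneg (sub_nonneg.mpr (by exact_mod_cast hij))]
    rw [hF, e1]
  -- per-i summed bound over all blocks
  have key : ∀ i ∈ Finset.Icc 1 (p' - q'),
      (∑ ℓ ∈ Finset.Icc 1 k,
        ∑ j ∈ Finset.Icc (ℓ * p' + 1) ((ℓ + 1) * p'), F (j - i)) ≤ S := by
    intro i hi
    rw [Finset.mem_Icc] at hi
    rw [Finset.sum_sigma']
    have hinj : ∀ x ∈ (Finset.Icc 1 k).sigma
          (fun ℓ => Finset.Icc (ℓ * p' + 1) ((ℓ + 1) * p')),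
        ∀ y ∈ (Finset.Icc 1 k).sigma
          (fun ℓ => Finset.Icc (ℓ * p' + 1) ((ℓ + 1) * p')),
        x.2 - i = y.2 - i → x = y := by
      rintro ⟨ℓ₁, j₁⟩ hx ⟨ℓ₂, j₂⟩ hy hxy
      dsimp only at hxy
      simp only [Finset.mem_sigma, Finset.mem_Icc] at hx hy
      have h1 : p' ≤ ℓ₁ * p' := Nat.le_mul_of_pos_left p' hx.1.1
      have h2 : p' ≤ ℓ₂ * p' := Nat.le_mul_of_pos_left p' hy.1.1
      have hj12 : j₁ = j₂ := by omega
      subst hj12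
      have hℓ12 : ℓ₁ = ℓ₂ := by
        rcases lt_trichotomy ℓ₁ ℓ₂ with hlt | heq | hgt
        · have := Nat.mul_le_mul_right p' (show ℓ₁ + 1 ≤ ℓ₂ by omega)
          omega
        · exact heq
        · have := Nat.mul_le_mul_right p' (show ℓ₂ + 1 ≤ ℓ₁ by omega)
          omega
      subst hℓ12
      rfl
    rw [← Finset.sum_image hinj]
    exact Summable.sum_le_tsum _ (fun d _ => hFnonneg d) hFsum
  -- assemble
  calc ∑ ℓ ∈ Finset.Icc 1 k, |cov P (Yminus X p' q') (Yshift X p' ℓ)|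
      ≤ ∑ ℓ ∈ Finset.Icc 1 k, (∑ i ∈ Finset.Icc 1 (p' - q'),
          ∑ j ∈ Finset.Icc (ℓ * p' + 1) ((ℓ + 1) * p'), F (j - i)) / (p' : ℝ) ^ 2 := by
        refine Finset.sum_le_sum fun ℓ hℓ => ?_
        rw [hcovY ℓ, abs_div, abs_of_nonneg (by positivity : (0:ℝ) ≤ (p' : ℝ) ^ 2)]
        refine div_le_div_of_nonneg_right ?_ (by positivity) |>.trans_eq rfl
        refine (Finset.abs_sum_le_sum_abs _ _).trans (Finset.sum_le_sum fun i hi => ?_)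
        refine (Finset.abs_sum_le_sum_abs _ _).trans (Finset.sum_le_sum fun j hj => ?_)
        exact hbound ℓ hℓ i hi j hj
    _ = (∑ i ∈ Finset.Icc 1 (p' - q'), ∑ ℓ ∈ Finset.Icc 1 k,
          ∑ j ∈ Finset.Icc (ℓ * p' + 1) ((ℓ + 1) * p'), F (j - i)) / (p' : ℝ) ^ 2 := by
        rw [← Finset.sum_div, Finset.sum_comm]
    _ ≤ (∑ _i ∈ Finset.Icc 1 (p' - q'), S) / (p' : ℝ) ^ 2 := by
        gcongr with i hi
        exact key i hi
    _ = ((p' - q' : ℕ) : ℝ) * S / (p' : ℝ) ^ 2 := by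
        rw [Finset.sum_const, Nat.card_Icc, nsmul_eq_mul]
        norm_num
    _ ≤ (S + 1) / (p' : ℝ) := by
        rw [div_le_div_iff₀ (by positivity) hp0]
        have h1 : ((p' - q' : ℕ) : ℝ) ≤ (p' : ℝ) := by
          exact_mod_cast Nat.sub_le p' q'
        nlinarith [mul_le_mul_of_nonneg_right h1 (mul_nonneg hS0 hp0.le), sq_nonneg (p' : ℝ)]
end
end

section
/- Let (X_i)_{i∈ℤ} be a strictly stationary real sequence with ‖X_0‖_r = (E|X_0|^r)^{1/r} < ∞ for some r > 4, α-mixing with coefficients (α(q)). Then there exists a constant c > 0, depending only on ‖X_0‖_r and r, such that for all integers p ≥ 1, q ≥ 1 and all finite intervals I, J ⊂ ℤ with #I ≤ p, #J ≤ p and dist(I,J) ≥ q: |Cov(G_I², G_J²)| ≤ c p² α(q)^{(r−4)/r}. -/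
open MeasureTheory ProbabilityTheory Filter Topology

noncomputable section

variable {Ω : Type*} [MeasurableSpace Ω]

/-- Normalized centred sum `G_I = p^{-1/2} Σ_{i∈I} (X_i − m)` over the interval
`I = [a,b] ∩ ℤ`. -/
def Gint (P : Measure Ω) (X : ℤ → Ω → ℝ) (p : ℕ) (a b : ℤ) (ω : Ω) : ℝ :=
  (∑ i ∈ Finset.Icc a b, (X i ω - meanX P X)) / Real.sqrt p

section DavydovAux

open scoped ENNReal NNReal

variable {Ω₀ : Type*} {mΩ₀ : MeasurableSpace Ω₀}


lemma integrable_of_bdd {μ : Measure Ω₀} [IsFiniteMeasure μ] {f : Ω₀ → ℝ} {C : ℝ}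
    (hf : AEStronglyMeasurable f μ) (h : ∀ ω, |f ω| ≤ C) : Integrable f μ :=
  ⟨hf, HasFiniteIntegral.of_bounded (C := C) (ae_of_all _ fun ω => by
    simpa [Real.norm_eq_abs] using h ω)⟩

lemma cov_def' (P : Measure Ω₀) (f g : Ω₀ → ℝ) :
    cov P f g = (∫ ω, f ω * g ω ∂P) - (∫ ω, f ω ∂P) * (∫ ω, g ω ∂P) := rfl

/-- Covariance bound for differences of indicators. -/
lemma abs_cov_indicator_diff_le
    (P : Measure Ω₀) [IsProbabilityMeasure P] {a : ℝ}
    {A1 A2 B1 B2 : Set Ω₀} (hA1 : MeasurableSet A1) (hA2 : MeasurableSet A2)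
    (hB1 : MeasurableSet B1) (hB2 : MeasurableSet B2)
    (h11 : |(P (A1 ∩ B1)).toReal - (P A1).toReal * (P B1).toReal| ≤ a)
    (h12 : |(P (A1 ∩ B2)).toReal - (P A1).toReal * (P B2).toReal| ≤ a)
    (h21 : |(P (A2 ∩ B1)).toReal - (P A2).toReal * (P B1).toReal| ≤ a)
    (h22 : |(P (A2 ∩ B2)).toReal - (P A2).toReal * (P B2).toReal| ≤ a) :
    |cov P (fun ω => A1.indicator 1 ω - A2.indicator 1 ω)
        (fun ω => B1.indicator 1 ω - B2.indicator 1 ω)| ≤ 4 * a := by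
  have hint : ∀ {S : Set Ω₀}, MeasurableSet S → Integrable (S.indicator (1 : Ω₀ → ℝ)) P :=
    fun hS => (integrable_const 1).indicator hS
  have hprodeq : ∀ (S T : Set Ω₀),
      (fun ω => S.indicator (1 : Ω₀ → ℝ) ω * T.indicator (1 : Ω₀ → ℝ) ω)
        = (S ∩ T).indicator (1 : Ω₀ → ℝ) := by
    intro S T; rw [Set.inter_indicator_one]; rfl
  have hpint : ∀ {S T : Set Ω₀}, MeasurableSet S → MeasurableSet T →
      Integrable (fun ω => S.indicator (1 : Ω₀ → ℝ) ω * T.indicator (1 : Ω₀ → ℝ) ω) P := by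
    intro S T hS hT; rw [hprodeq S T]; exact hint (hS.inter hT)
  have hprod : ∀ {S T : Set Ω₀}, MeasurableSet S → MeasurableSet T →
      ∫ ω, S.indicator (1 : Ω₀ → ℝ) ω * T.indicator (1 : Ω₀ → ℝ) ω ∂P
        = (P (S ∩ T)).toReal := by
    intro S T hS hT
    rw [hprodeq S T]
    exact integral_indicator_one (hS.inter hT)
  have e1 : ∫ ω, (A1.indicator 1 ω - A2.indicator 1 ω)
      * (B1.indicator 1 ω - B2.indicator 1 ω) ∂P
      = (P (A1 ∩ B1)).toReal - (P (A1 ∩ B2)).toReal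
        - (P (A2 ∩ B1)).toReal + (P (A2 ∩ B2)).toReal := by
    have hptw : ∀ ω, (A1.indicator (1:Ω₀→ℝ) ω - A2.indicator 1 ω)
        * (B1.indicator (1:Ω₀→ℝ) ω - B2.indicator 1 ω)
        = (A1.indicator (1:Ω₀→ℝ) ω * B1.indicator 1 ω
            - A1.indicator 1 ω * B2.indicator 1 ω)
          - (A2.indicator (1:Ω₀→ℝ) ω * B1.indicator 1 ω
            - A2.indicator 1 ω * B2.indicator 1 ω) := fun ω => by ring
    have hs1 : Integrable (fun ω => A1.indicator (1:Ω₀→ℝ) ω * B1.indicator 1 ω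
        - A1.indicator (1:Ω₀→ℝ) ω * B2.indicator 1 ω) P :=
      (hpint hA1 hB1).sub (hpint hA1 hB2)
    have hs2 : Integrable (fun ω => A2.indicator (1:Ω₀→ℝ) ω * B1.indicator 1 ω
        - A2.indicator (1:Ω₀→ℝ) ω * B2.indicator 1 ω) P :=
      (hpint hA2 hB1).sub (hpint hA2 hB2)
    rw [integral_congr_ae (ae_of_all _ hptw), integral_sub hs1 hs2,
      integral_sub (hpint hA1 hB1) (hpint hA1 hB2),
      integral_sub (hpint hA2 hB1) (hpint hA2 hB2),
      hprod hA1 hB1, hprod hA1 hB2, hprod hA2 hB1, hprod hA2 hB2]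
    ring
  have e2 : ∫ ω, (A1.indicator (1:Ω₀→ℝ) ω - A2.indicator 1 ω) ∂P
      = (P A1).toReal - (P A2).toReal := by
    rw [integral_sub (hint hA1) (hint hA2), integral_indicator_one hA1,
      integral_indicator_one hA2, measureReal_def, measureReal_def]
  have e3 : ∫ ω, (B1.indicator (1:Ω₀→ℝ) ω - B2.indicator 1 ω) ∂P
      = (P B1).toReal - (P B2).toReal := by
    rw [integral_sub (hint hB1) (hint hB2), integral_indicator_one hB1,
      integral_indicator_one hB2, measureReal_def, measureReal_def]
  rw [cov_def']
  beta_reduce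
  rw [e1, e2, e3]
  obtain ⟨i11, j11⟩ := abs_le.1 h11
  obtain ⟨i12, j12⟩ := abs_le.1 h12
  obtain ⟨i21, j21⟩ := abs_le.1 h21
  obtain ⟨i22, j22⟩ := abs_le.1 h22
  rw [abs_le]
  constructor <;> nlinarith [i11, j11, i12, j12, i21, j21, i22, j22]

/-- Covariance bound for bounded random variables measurable with respect to two
sub-σ-algebras satisfying a uniform mixing bound. -/
lemma abs_cov_le_of_bdd
    (P : Measure Ω₀) [IsProbabilityMeasure P]
    {a : ℝ} {ξ η : Ω₀ → ℝ}
    (hm : ∀ S T : Set ℝ, MeasurableSet S → MeasurableSet T →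
      |(P (ξ ⁻¹' S ∩ η ⁻¹' T)).toReal
        - (P (ξ ⁻¹' S)).toReal * (P (η ⁻¹' T)).toReal| ≤ a)
    (hξm : Measurable ξ) (hηm : Measurable η)
    {C₁ C₂ : ℝ} (hC₁ : 0 ≤ C₁) (hC₂ : 0 ≤ C₂)
    (hbξ : ∀ ω, |ξ ω| ≤ C₁) (hbη : ∀ ω, |η ω| ≤ C₂) :
    |cov P ξ η| ≤ 4 * C₁ * C₂ * a := by
  classical
  have ha : 0 ≤ a := by
    have := hm ∅ ∅ MeasurableSet.empty MeasurableSet.empty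
    simpa using le_trans (abs_nonneg _) this
  set h : ℝ → ℝ → ℝ :=
    fun t x => (if t < x then (1:ℝ) else 0) - (if x < -t then (1:ℝ) else 0) with hdef
  have hb : ∀ t x, |h t x| ≤ 1 := by
    intro t x; simp only [hdef]; split_ifs <;> norm_num
  set μ₁ := volume.restrict (Set.Ioc (0:ℝ) C₁) with hμ₁
  set μ₂ := volume.restrict (Set.Ioc (0:ℝ) C₂) with hμ₂
  haveI : IsFiniteMeasure μ₁ :=
    ⟨by rw [hμ₁, Measure.restrict_apply_univ]; exact measure_Ioc_lt_top⟩
  haveI : IsFiniteMeasure μ₂ :=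
    ⟨by rw [hμ₂, Measure.restrict_apply_univ]; exact measure_Ioc_lt_top⟩
  -- the layer-cake representation
  have hind : ∀ (y C : ℝ), y ≤ C →
      ∫ t, (Set.Iio y).indicator (1 : ℝ → ℝ) t ∂(volume.restrict (Set.Ioc (0:ℝ) C))
        = max y 0 := by
    intro y C hyC
    rw [integral_indicator_one measurableSet_Iio, measureReal_def,
      Measure.restrict_apply measurableSet_Iio]
    have hset : Set.Iio y ∩ Set.Ioc 0 C = Set.Ioo 0 y := by
      ext t
      simp only [Set.mem_inter_iff, Set.mem_Iio, Set.mem_Ioc, Set.mem_Ioo]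
      constructor
      · rintro ⟨h1, h2, h3⟩; exact ⟨h2, h1⟩
      · rintro ⟨h1, h2⟩; exact ⟨h2, h1, (h2.le.trans hyC)⟩
    rw [hset, Real.volume_Ioo, sub_zero]
    rcases le_total 0 y with hy | hy
    · rw [ENNReal.toReal_ofReal hy, max_eq_left hy]
    · rw [ENNReal.ofReal_eq_zero.2 hy, ENNReal.toReal_zero, max_eq_right hy]
  have hrep : ∀ (C x : ℝ), |x| ≤ C →
      ∫ t, h t x ∂(volume.restrict (Set.Ioc (0:ℝ) C)) = x := by
    intro C x hx
    obtain ⟨hx1, hx2⟩ := abs_le.1 hx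
    haveI : IsFiniteMeasure (volume.restrict (Set.Ioc (0:ℝ) C)) :=
      ⟨by rw [Measure.restrict_apply_univ]; exact measure_Ioc_lt_top⟩
    have hi1 : Integrable ((Set.Iio x).indicator (1 : ℝ → ℝ))
        (volume.restrict (Set.Ioc (0:ℝ) C)) :=
      (integrable_const 1).indicator measurableSet_Iio
    have hi2 : Integrable ((Set.Iio (-x)).indicator (1 : ℝ → ℝ))
        (volume.restrict (Set.Ioc (0:ℝ) C)) :=
      (integrable_const 1).indicator measurableSet_Iio
    have hptw : ∀ t, h t x = (Set.Iio x).indicator (1 : ℝ → ℝ) t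
        - (Set.Iio (-x)).indicator (1 : ℝ → ℝ) t := by
      intro t
      have hiff : x < -t ↔ t < -x := ⟨fun h' => by linarith, fun h' => by linarith⟩
      simp only [hdef, Set.indicator_apply, Set.mem_Iio, Pi.one_apply, hiff]
    rw [integral_congr_ae (ae_of_all _ hptw), integral_sub hi1 hi2,
      hind x C hx2, hind (-x) C (by linarith)]
    rcases le_total 0 x with hx0 | hx0
    · rw [max_eq_left hx0, max_eq_right (by linarith), sub_zero]
    · rw [max_eq_right hx0, max_eq_left (by linarith)]; ring
  -- measurability of the kernels
  have hmeas1 : Measurable (fun q : Ω₀ × ℝ => h q.2 (ξ q.1)) := by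
    apply Measurable.sub
    · exact Measurable.ite
        (measurableSet_lt measurable_snd (hξm.comp measurable_fst))
        measurable_const measurable_const
    · exact Measurable.ite
        (measurableSet_lt (hξm.comp measurable_fst) measurable_snd.neg)
        measurable_const measurable_const
  have hmeas2 : Measurable (fun q : Ω₀ × ℝ => h q.2 (η q.1)) := by
    apply Measurable.sub
    · exact Measurable.ite
        (measurableSet_lt measurable_snd (hηm.comp measurable_fst))
        measurable_const measurable_const
    · exact Measurable.ite
        (measurableSet_lt (hηm.comp measurable_fst) measurable_snd.neg)
        measurable_const measurable_const
  set ν := μ₁.prod μ₂ with hν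
  have hFmeas : Measurable (Function.uncurry
      fun (ω : Ω₀) (st : ℝ × ℝ) => h st.1 (ξ ω) * h st.2 (η ω)) := by
    apply Measurable.mul
    · exact hmeas1.comp (measurable_fst.prodMk (measurable_snd.fst))
    · exact hmeas2.comp (measurable_fst.prodMk (measurable_snd.snd))
  have hFint : Integrable (Function.uncurry
      fun (ω : Ω₀) (st : ℝ × ℝ) => h st.1 (ξ ω) * h st.2 (η ω)) (P.prod ν) := by
    refine integrable_of_bdd (C := 1) hFmeas.aestronglyMeasurable (fun q => ?_)
    rw [Function.uncurry, abs_mul]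
    exact mul_le_one₀ (hb _ _) (abs_nonneg _) (hb _ _)
  have hG1int : Integrable (Function.uncurry fun (ω : Ω₀) (s : ℝ) => h s (ξ ω)) (P.prod μ₁) :=
    integrable_of_bdd hmeas1.aestronglyMeasurable (fun q => hb _ _)
  have hG2int : Integrable (Function.uncurry fun (ω : Ω₀) (t : ℝ) => h t (η ω)) (P.prod μ₂) :=
    integrable_of_bdd hmeas2.aestronglyMeasurable (fun q => hb _ _)
  -- Fubini computations
  have eξ : ∀ ω, ξ ω = ∫ s, h s (ξ ω) ∂μ₁ := fun ω => (hrep C₁ (ξ ω) (hbξ ω)).symm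
  have eη : ∀ ω, η ω = ∫ t, h t (η ω) ∂μ₂ := fun ω => (hrep C₂ (η ω) (hbη ω)).symm
  have E1 : ∫ ω, ξ ω * η ω ∂P = ∫ st, ∫ ω, h st.1 (ξ ω) * h st.2 (η ω) ∂P ∂ν := by
    have e : ∀ ω, ξ ω * η ω = ∫ st, h st.1 (ξ ω) * h st.2 (η ω) ∂ν := by
      intro ω
      calc ξ ω * η ω = (∫ s, h s (ξ ω) ∂μ₁) * ∫ t, h t (η ω) ∂μ₂ := by
            rw [← eξ ω, ← eη ω]
        _ = _ := (integral_prod_mul (fun s => h s (ξ ω)) (fun t => h t (η ω))).symm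
    calc ∫ ω, ξ ω * η ω ∂P = ∫ ω, ∫ st, h st.1 (ξ ω) * h st.2 (η ω) ∂ν ∂P :=
          integral_congr_ae (ae_of_all _ e)
      _ = _ := integral_integral_swap
          (f := fun (ω : Ω₀) (st : ℝ × ℝ) => h st.1 (ξ ω) * h st.2 (η ω)) hFint
  have E2 : ∫ ω, ξ ω ∂P = ∫ s, (∫ ω, h s (ξ ω) ∂P) ∂μ₁ := by
    calc ∫ ω, ξ ω ∂P = ∫ ω, ∫ s, h s (ξ ω) ∂μ₁ ∂P :=
          integral_congr_ae (ae_of_all _ eξ)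
      _ = _ := integral_integral_swap (f := fun (ω : Ω₀) (s : ℝ) => h s (ξ ω)) hG1int
  have E3 : ∫ ω, η ω ∂P = ∫ t, (∫ ω, h t (η ω) ∂P) ∂μ₂ := by
    calc ∫ ω, η ω ∂P = ∫ ω, ∫ t, h t (η ω) ∂μ₂ ∂P :=
          integral_congr_ae (ae_of_all _ eη)
      _ = _ := integral_integral_swap (f := fun (ω : Ω₀) (t : ℝ) => h t (η ω)) hG2int
  have E4 : (∫ ω, ξ ω ∂P) * (∫ ω, η ω ∂P)
      = ∫ st, (∫ ω, h st.1 (ξ ω) ∂P) * (∫ ω, h st.2 (η ω) ∂P) ∂ν := by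
    rw [E2, E3, hν]
    exact (integral_prod_mul (fun s => ∫ ω, h s (ξ ω) ∂P)
      (fun t => ∫ ω, h t (η ω) ∂P)).symm
  -- integrability of the two functions of (s,t)
  have hi1 : Integrable (fun st : ℝ × ℝ => ∫ ω, h st.1 (ξ ω) * h st.2 (η ω) ∂P) ν :=
    hFint.integral_prod_right
  have hsm1 : StronglyMeasurable (fun s : ℝ => ∫ ω, h s (ξ ω) ∂P) := by
    have : StronglyMeasurable (fun q : ℝ × Ω₀ => h q.1 (ξ q.2)) := by
      refine Measurable.stronglyMeasurable ?_
      exact hmeas1.comp (measurable_snd.prodMk measurable_fst)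
    exact this.integral_prod_right'
  have hsm2 : StronglyMeasurable (fun t : ℝ => ∫ ω, h t (η ω) ∂P) := by
    have : StronglyMeasurable (fun q : ℝ × Ω₀ => h q.1 (η q.2)) := by
      refine Measurable.stronglyMeasurable ?_
      exact hmeas2.comp (measurable_snd.prodMk measurable_fst)
    exact this.integral_prod_right'
  have hintb : ∀ (g : Ω₀ → ℝ), (∀ ω, |g ω| ≤ 1) → |∫ ω, g ω ∂P| ≤ 1 := by
    intro g hg
    calc |∫ ω, g ω ∂P| ≤ ∫ _, (1:ℝ) ∂P := by
          rw [← Real.norm_eq_abs]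
          exact norm_integral_le_of_norm_le (integrable_const 1)
            (ae_of_all _ fun ω => by simpa [Real.norm_eq_abs] using hg ω)
      _ = 1 := by simp
  have hi2 : Integrable
      (fun st : ℝ × ℝ => (∫ ω, h st.1 (ξ ω) ∂P) * (∫ ω, h st.2 (η ω) ∂P)) ν := by
    refine integrable_of_bdd (C := 1) ?_ (fun st => ?_)
    · exact ((hsm1.comp_measurable measurable_fst).mul
        (hsm2.comp_measurable measurable_snd)).aestronglyMeasurable
    · rw [abs_mul]
      exact mul_le_one₀ (hintb _ fun ω => hb _ _) (abs_nonneg _) (hintb _ fun ω => hb _ _)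
  -- the covariance as a double integral
  have hcov : cov P ξ η = ∫ st, (∫ ω, h st.1 (ξ ω) * h st.2 (η ω) ∂P
      - (∫ ω, h st.1 (ξ ω) ∂P) * (∫ ω, h st.2 (η ω) ∂P)) ∂ν := by
    rw [cov_def', E1, E4, integral_sub hi1 hi2]
  -- pointwise bound on the inner covariance
  have hptbdd : ∀ st : ℝ × ℝ, |∫ ω, h st.1 (ξ ω) * h st.2 (η ω) ∂P
      - (∫ ω, h st.1 (ξ ω) ∂P) * (∫ ω, h st.2 (η ω) ∂P)| ≤ 4 * a := by
    intro st
    have hfeq : (fun ω => h st.1 (ξ ω))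
        = fun ω => (ξ ⁻¹' Set.Ioi st.1).indicator 1 ω
          - (ξ ⁻¹' Set.Iio (-st.1)).indicator 1 ω := by
      funext ω
      simp [hdef, Set.indicator_apply, Set.mem_Ioi, Set.mem_Iio]
    have hgeq : (fun ω => h st.2 (η ω))
        = fun ω => (η ⁻¹' Set.Ioi st.2).indicator 1 ω
          - (η ⁻¹' Set.Iio (-st.2)).indicator 1 ω := by
      funext ω
      simp [hdef, Set.indicator_apply, Set.mem_Ioi, Set.mem_Iio]
    have key := abs_cov_indicator_diff_le (A1 := ξ ⁻¹' Set.Ioi st.1)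
      (A2 := ξ ⁻¹' Set.Iio (-st.1)) (B1 := η ⁻¹' Set.Ioi st.2)
      (B2 := η ⁻¹' Set.Iio (-st.2)) P
      (hξm measurableSet_Ioi) (hξm measurableSet_Iio)
      (hηm measurableSet_Ioi) (hηm measurableSet_Iio)
      (hm _ _ measurableSet_Ioi measurableSet_Ioi)
      (hm _ _ measurableSet_Ioi measurableSet_Iio)
      (hm _ _ measurableSet_Iio measurableSet_Ioi)
      (hm _ _ measurableSet_Iio measurableSet_Iio)
    rw [cov_def', ← hfeq, ← hgeq] at key
    exact key
  calc |cov P ξ η| ≤ ∫ _, 4 * a ∂ν := by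
        rw [hcov, ← Real.norm_eq_abs]
        exact norm_integral_le_of_norm_le (integrable_const _)
          (ae_of_all _ fun st => by simpa [Real.norm_eq_abs] using hptbdd st)
    _ = C₁ * C₂ * (4 * a) := by
        rw [integral_const, smul_eq_mul]
        congr 1
        rw [hν, ← Set.univ_prod_univ, measureReal_def, Measure.prod_prod, hμ₁, hμ₂,
          Measure.restrict_apply_univ, Measure.restrict_apply_univ,
          Real.volume_Ioc, Real.volume_Ioc, sub_zero, sub_zero,
          ← ENNReal.ofReal_mul hC₁, ENNReal.toReal_ofReal (by positivity)]
    _ = 4 * C₁ * C₂ * a := by ring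


/-- Davydov's covariance inequality, preimage form. -/
lemma davydov_cov_bound
    (P : Measure Ω₀) [IsProbabilityMeasure P]
    {a : ℝ} (ha : 0 ≤ a) {ξ η : Ω₀ → ℝ}
    (hm : ∀ S T : Set ℝ, MeasurableSet S → MeasurableSet T →
      |(P (ξ ⁻¹' S ∩ η ⁻¹' T)).toReal
        - (P (ξ ⁻¹' S)).toReal * (P (η ⁻¹' T)).toReal| ≤ a)
    (hξm : Measurable ξ) (hηm : Measurable η)
    {s : ℝ} (hs : 2 < s) {K : ℝ} (hK : 0 < K)
    (hξi : Integrable (fun ω => |ξ ω| ^ s) P)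
    (hηi : Integrable (fun ω => |η ω| ^ s) P)
    (hξK : ∫ ω, |ξ ω| ^ s ∂P ≤ K ^ s)
    (hηK : ∫ ω, |η ω| ^ s ∂P ≤ K ^ s) :
    |cov P ξ η| ≤ 10 * K ^ 2 * a ^ (1 - 2 / s) := by
  have hs0 : (0:ℝ) < s := by linarith
  have hs1 : (1:ℝ) ≤ s := by linarith
  have hexp0 : 0 ≤ 1 - 2 / s := by
    have : 2 / s < 1 := (div_lt_one hs0).2 (by linarith)
    linarith
  -- main estimate for a strictly positive mixing bound `b`
  have main : ∀ b : ℝ, a ≤ b → 0 < b →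
      |cov P ξ η| ≤ 10 * K ^ 2 * b ^ (1 - 2 / s) := by
    intro b hab hb
    set M : ℝ := K * b ^ (-(1 / s)) with hMdef
    have hM : 0 < M := by
      have : (0:ℝ) < b ^ (-(1 / s)) := Real.rpow_pos_of_pos hb _
      positivity
    set clip : ℝ → ℝ := fun x => max (min x M) (-M) with hclipdef
    have hclipm : Measurable clip := (measurable_id.min measurable_const).max measurable_const
    have pclip : ∀ x, |clip x| ≤ M := by
      intro x
      rw [abs_le]
      exact ⟨le_max_right _ _, max_le (min_le_right _ _) (by linarith)⟩
    have hclip_eq : ∀ x, |x| ≤ M → clip x = x := by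
      intro x hx
      obtain ⟨h1, h2⟩ := abs_le.1 hx
      rw [hclipdef]
      simp only [min_eq_left h2, max_eq_left h1]
    have htail_abs : ∀ x, M < |x| → |x - clip x| = |x| - M := by
      intro x hx
      rcases lt_abs.1 hx with hx' | hx'
      · rw [hclipdef]
        simp only [min_eq_right hx'.le, max_eq_left (by linarith : -M ≤ M)]
        rw [abs_of_nonneg (by linarith), abs_of_nonneg (by linarith)]
      · have hxneg : x < -M := by linarith
        rw [hclipdef]
        simp only [min_eq_left (by linarith : x ≤ M), max_eq_right hxneg.le]
        rw [abs_of_nonpos (by linarith), abs_of_nonpos (by linarith)]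
        ring
    have ptail1 : ∀ x, |x - clip x| ≤ |x| ^ s * M ^ (1 - s) := by
      intro x
      rcases le_or_gt (|x|) M with hx | hx
      · rw [hclip_eq x hx, sub_self, abs_zero]
        positivity
      · rw [htail_abs x hx]
        have h0x : 0 < |x| := lt_trans hM hx
        calc |x| - M ≤ |x| := by linarith
          _ = |x| ^ s * |x| ^ (1 - s) := by
              rw [← Real.rpow_add h0x]
              norm_num
          _ ≤ |x| ^ s * M ^ (1 - s) := by
              refine mul_le_mul_of_nonneg_left ?_ (Real.rpow_nonneg (abs_nonneg _) _)
              exact Real.rpow_le_rpow_of_nonpos hM hx.le (by linarith)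
    have ptail2 : ∀ x, |x - clip x| ^ (2:ℝ) ≤ |x| ^ s * M ^ (2 - s) := by
      intro x
      rcases le_or_gt (|x|) M with hx | hx
      · rw [hclip_eq x hx, sub_self, abs_zero, Real.zero_rpow (by norm_num)]
        positivity
      · rw [htail_abs x hx]
        have h0x : 0 < |x| := lt_trans hM hx
        calc (|x| - M) ^ (2:ℝ) ≤ |x| ^ (2:ℝ) := by
              refine Real.rpow_le_rpow (by linarith) (by linarith) (by norm_num)
          _ = |x| ^ s * |x| ^ (2 - s) := by
              rw [← Real.rpow_add h0x]
              norm_num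
          _ ≤ |x| ^ s * M ^ (2 - s) := by
              refine mul_le_mul_of_nonneg_left ?_ (Real.rpow_nonneg (abs_nonneg _) _)
              exact Real.rpow_le_rpow_of_nonpos hM hx.le (by linarith)
    set ξ₁ : Ω₀ → ℝ := fun ω => clip (ξ ω) with hξ₁def
    set ξ₂ : Ω₀ → ℝ := fun ω => ξ ω - clip (ξ ω) with hξ₂def
    set η₁ : Ω₀ → ℝ := fun ω => clip (η ω) with hη₁def
    set η₂ : Ω₀ → ℝ := fun ω => η ω - clip (η ω) with hη₂def
    have hξ₁m : Measurable ξ₁ := hclipm.comp hξm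
    have hη₁m : Measurable η₁ := hclipm.comp hηm
    have hξ₂m : Measurable ξ₂ := hξm.sub hξ₁m
    have hη₂m : Measurable η₂ := hηm.sub hη₁m
    -- integrability of the pieces
    have habs_int : ∀ (f : Ω₀ → ℝ), Measurable f → Integrable (fun ω => |f ω| ^ s) P →
        Integrable f P := by
      intro f hfm hfi
      refine Integrable.mono' ((integrable_const 1).add hfi)
        hfm.aestronglyMeasurable (ae_of_all _ fun ω => ?_)
      rw [Real.norm_eq_abs]
      show |f ω| ≤ 1 + |f ω| ^ s
      rcases le_total (|f ω|) 1 with h1 | h1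
      · have : (0:ℝ) ≤ |f ω| ^ s := Real.rpow_nonneg (abs_nonneg _) _
        linarith
      · have : |f ω| ^ (1:ℝ) ≤ |f ω| ^ s :=
          Real.rpow_le_rpow_of_exponent_le h1 hs1
        rw [Real.rpow_one] at this
        linarith
    have hξint : Integrable ξ P := habs_int ξ hξm hξi
    have hηint : Integrable η P := habs_int η hηm hηi
    have hξ₁int : Integrable ξ₁ P :=
      integrable_of_bdd hξ₁m.aestronglyMeasurable (fun ω => pclip (ξ ω))
    have hη₁int : Integrable η₁ P :=
      integrable_of_bdd hη₁m.aestronglyMeasurable (fun ω => pclip (η ω))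
    have hξ₂int : Integrable ξ₂ P := hξint.sub hξ₁int
    have hη₂int : Integrable η₂ P := hηint.sub hη₁int
    have hξ₂sq : Integrable (fun ω => |ξ₂ ω| ^ (2:ℝ)) P := by
      refine Integrable.mono' (hξi.mul_const (M ^ (2 - s))) ?_ (ae_of_all _ fun ω => ?_)
      · have heq : (fun ω => |ξ₂ ω| ^ (2:ℝ)) = fun ω => (ξ₂ ω) ^ (2:ℕ) := by
          funext ω
          rw [show (2:ℝ) = ((2:ℕ):ℝ) by norm_num, Real.rpow_natCast, sq_abs]
        rw [heq]
        exact (hξ₂m.pow_const 2).aestronglyMeasurable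
      · rw [Real.norm_eq_abs, abs_of_nonneg (Real.rpow_nonneg (abs_nonneg _) _)]
        exact ptail2 (ξ ω)
    have hη₂sq : Integrable (fun ω => |η₂ ω| ^ (2:ℝ)) P := by
      refine Integrable.mono' (hηi.mul_const (M ^ (2 - s))) ?_ (ae_of_all _ fun ω => ?_)
      · have heq : (fun ω => |η₂ ω| ^ (2:ℝ)) = fun ω => (η₂ ω) ^ (2:ℕ) := by
          funext ω
          rw [show (2:ℝ) = ((2:ℕ):ℝ) by norm_num, Real.rpow_natCast, sq_abs]
        rw [heq]
        exact (hη₂m.pow_const 2).aestronglyMeasurable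
      · rw [Real.norm_eq_abs, abs_of_nonneg (Real.rpow_nonneg (abs_nonneg _) _)]
        exact ptail2 (η ω)
    -- MemLp 2 facts
    have hL2 : ∀ (f : Ω₀ → ℝ), Measurable f → Integrable (fun ω => |f ω| ^ (2:ℝ)) P →
        MemLp f (ENNReal.ofReal 2) P := by
      intro f hfm hfi
      have h1 : MemLp (fun ω => ‖f ω‖ ^ (ENNReal.ofReal 2).toReal) 1 P := by
        rw [memLp_one_iff_integrable]
        simpa [Real.norm_eq_abs, ENNReal.toReal_ofReal] using hfi
      have hq0 : (ENNReal.ofReal 2) ≠ 0 := by simp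
      have hqt : (ENNReal.ofReal 2) ≠ ⊤ := ENNReal.ofReal_ne_top
      have h1' : MemLp (fun ω => ‖f ω‖ ^ (ENNReal.ofReal 2).toReal)
          (ENNReal.ofReal 2 / ENNReal.ofReal 2) P := by
        rw [ENNReal.div_self hq0 hqt]
        exact h1
      exact (memLp_norm_rpow_iff (p := ENNReal.ofReal 2)
        hfm.aestronglyMeasurable hq0 hqt).1 h1'
    have hξ₂L2 : MemLp ξ₂ (ENNReal.ofReal 2) P := hL2 ξ₂ hξ₂m hξ₂sq
    have hη₂L2 : MemLp η₂ (ENNReal.ofReal 2) P := hL2 η₂ hη₂m hη₂sq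
    have hconj : Real.HolderConjugate 2 2 := Real.HolderConjugate.two_two
    -- product integrability
    have p11 : Integrable (fun ω => ξ₁ ω * η₁ ω) P :=
      hη₁int.bdd_mul hξ₁m.aestronglyMeasurable
        (ae_of_all _ fun ω => by simpa [Real.norm_eq_abs] using pclip (ξ ω))
    have p12 : Integrable (fun ω => ξ₁ ω * η₂ ω) P :=
      hη₂int.bdd_mul hξ₁m.aestronglyMeasurable
        (ae_of_all _ fun ω => by simpa [Real.norm_eq_abs] using pclip (ξ ω))
    have p21 : Integrable (fun ω => ξ₂ ω * η₁ ω) P := by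
      have := hξ₂int.bdd_mul hη₁m.aestronglyMeasurable
        (ae_of_all _ fun ω => by simpa [Real.norm_eq_abs] using pclip (η ω))
      exact this.congr (ae_of_all _ fun ω => mul_comm _ _)
    have pAMGM : ∀ x y : ℝ, |x * y| ≤ (|x| ^ (2:ℝ) + |y| ^ (2:ℝ)) / 2 := by
      intro x y
      rw [abs_mul, show (2:ℝ) = ((2:ℕ):ℝ) by norm_num, Real.rpow_natCast,
        Real.rpow_natCast]
      nlinarith [abs_nonneg x, abs_nonneg y, sq_nonneg (|x| - |y|)]
    have p22 : Integrable (fun ω => ξ₂ ω * η₂ ω) P := by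
      refine Integrable.mono' ((hξ₂sq.add hη₂sq).div_const 2)
        (hξ₂m.mul hη₂m).aestronglyMeasurable (ae_of_all _ fun ω => ?_)
      rw [Real.norm_eq_abs]
      exact pAMGM _ _
    -- integral splittings
    have Eξ : ∫ ω, ξ ω ∂P = (∫ ω, ξ₁ ω ∂P) + ∫ ω, ξ₂ ω ∂P := by
      rw [← integral_add hξ₁int hξ₂int]
      refine integral_congr_ae (ae_of_all _ fun ω => ?_)
      simp only [hξ₁def, hξ₂def]
      ring
    have Eη : ∫ ω, η ω ∂P = (∫ ω, η₁ ω ∂P) + ∫ ω, η₂ ω ∂P := by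
      rw [← integral_add hη₁int hη₂int]
      refine integral_congr_ae (ae_of_all _ fun ω => ?_)
      simp only [hη₁def, hη₂def]
      ring
    have i1 : Integrable (fun ω => ξ₁ ω * η₁ ω + ξ₁ ω * η₂ ω) P := p11.add p12
    have i2 : Integrable (fun ω => (ξ₁ ω * η₁ ω + ξ₁ ω * η₂ ω) + ξ₂ ω * η₁ ω) P :=
      i1.add p21
    have Exy : ∫ ω, ξ ω * η ω ∂P
        = (((∫ ω, ξ₁ ω * η₁ ω ∂P) + ∫ ω, ξ₁ ω * η₂ ω ∂P)
          + ∫ ω, ξ₂ ω * η₁ ω ∂P) + ∫ ω, ξ₂ ω * η₂ ω ∂P := by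
      calc ∫ ω, ξ ω * η ω ∂P
          = ∫ ω, ((ξ₁ ω * η₁ ω + ξ₁ ω * η₂ ω) + ξ₂ ω * η₁ ω) + ξ₂ ω * η₂ ω ∂P := by
            refine integral_congr_ae (ae_of_all _ fun ω => ?_)
            simp only [hξ₁def, hξ₂def, hη₁def, hη₂def]
            ring
        _ = (∫ ω, (ξ₁ ω * η₁ ω + ξ₁ ω * η₂ ω) + ξ₂ ω * η₁ ω ∂P)
            + ∫ ω, ξ₂ ω * η₂ ω ∂P := integral_add i2 p22
        _ = ((∫ ω, ξ₁ ω * η₁ ω + ξ₁ ω * η₂ ω ∂P) + ∫ ω, ξ₂ ω * η₁ ω ∂P)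
            + ∫ ω, ξ₂ ω * η₂ ω ∂P :=
            congrArg (fun z => z + ∫ ω, ξ₂ ω * η₂ ω ∂P) (integral_add i1 p21)
        _ = (((∫ ω, ξ₁ ω * η₁ ω ∂P) + ∫ ω, ξ₁ ω * η₂ ω ∂P)
            + ∫ ω, ξ₂ ω * η₁ ω ∂P) + ∫ ω, ξ₂ ω * η₂ ω ∂P :=
            congrArg (fun z => (z + ∫ ω, ξ₂ ω * η₁ ω ∂P) + ∫ ω, ξ₂ ω * η₂ ω ∂P)
              (integral_add p11 p12)
    -- elementary bounds on integrals
    have habs_le : ∀ (f : Ω₀ → ℝ), |∫ ω, f ω ∂P| ≤ ∫ ω, |f ω| ∂P := by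
      intro f
      simpa [Real.norm_eq_abs] using
        norm_integral_le_integral_norm (f := f) (μ := P)
    have hIξ₂ : ∫ ω, |ξ₂ ω| ∂P ≤ K ^ s * M ^ (1 - s) := by
      calc ∫ ω, |ξ₂ ω| ∂P ≤ ∫ ω, |ξ ω| ^ s * M ^ (1 - s) ∂P := by
            refine integral_mono hξ₂int.abs (hξi.mul_const _) (fun ω => ptail1 (ξ ω))
        _ = (∫ ω, |ξ ω| ^ s ∂P) * M ^ (1 - s) := by rw [integral_mul_const]
        _ ≤ K ^ s * M ^ (1 - s) := by
            exact mul_le_mul_of_nonneg_right hξK (Real.rpow_nonneg hM.le _)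
    have hIη₂ : ∫ ω, |η₂ ω| ∂P ≤ K ^ s * M ^ (1 - s) := by
      calc ∫ ω, |η₂ ω| ∂P ≤ ∫ ω, |η ω| ^ s * M ^ (1 - s) ∂P := by
            refine integral_mono hη₂int.abs (hηi.mul_const _) (fun ω => ptail1 (η ω))
        _ = (∫ ω, |η ω| ^ s ∂P) * M ^ (1 - s) := by rw [integral_mul_const]
        _ ≤ K ^ s * M ^ (1 - s) := by
            exact mul_le_mul_of_nonneg_right hηK (Real.rpow_nonneg hM.le _)
    have hSξ : ∫ ω, |ξ₂ ω| ^ (2:ℝ) ∂P ≤ K ^ s * M ^ (2 - s) := by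
      calc ∫ ω, |ξ₂ ω| ^ (2:ℝ) ∂P ≤ ∫ ω, |ξ ω| ^ s * M ^ (2 - s) ∂P :=
            integral_mono hξ₂sq (hξi.mul_const _) (fun ω => ptail2 (ξ ω))
        _ = (∫ ω, |ξ ω| ^ s ∂P) * M ^ (2 - s) := by rw [integral_mul_const]
        _ ≤ K ^ s * M ^ (2 - s) :=
            mul_le_mul_of_nonneg_right hξK (Real.rpow_nonneg hM.le _)
    have hSη : ∫ ω, |η₂ ω| ^ (2:ℝ) ∂P ≤ K ^ s * M ^ (2 - s) := by
      calc ∫ ω, |η₂ ω| ^ (2:ℝ) ∂P ≤ ∫ ω, |η ω| ^ s * M ^ (2 - s) ∂P :=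
            integral_mono hη₂sq (hηi.mul_const _) (fun ω => ptail2 (η ω))
        _ = (∫ ω, |η ω| ^ s ∂P) * M ^ (2 - s) := by rw [integral_mul_const]
        _ ≤ K ^ s * M ^ (2 - s) :=
            mul_le_mul_of_nonneg_right hηK (Real.rpow_nonneg hM.le _)
    set T : ℝ := K ^ s * M ^ (2 - s) with hTdef
    have hT0 : 0 < T := by
      have h1 : (0:ℝ) < K ^ s := Real.rpow_pos_of_pos hK _
      have h2 : (0:ℝ) < M ^ (2 - s) := Real.rpow_pos_of_pos hM _
      positivity
    have hsqrtmul : T ^ ((1:ℝ)/2) * T ^ ((1:ℝ)/2) = T := by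
      rw [← Real.rpow_add hT0]
      norm_num
    -- Cauchy–Schwarz consequences
    have hCSξη : ∫ ω, |ξ₂ ω * η₂ ω| ∂P ≤ T := by
      have h := integral_mul_norm_le_Lp_mul_Lq hconj hξ₂L2 hη₂L2
      have e : ∫ ω, |ξ₂ ω * η₂ ω| ∂P = ∫ ω, ‖ξ₂ ω‖ * ‖η₂ ω‖ ∂P := by
        refine integral_congr_ae (ae_of_all _ fun ω => ?_)
        show |ξ₂ ω * η₂ ω| = ‖ξ₂ ω‖ * ‖η₂ ω‖
        rw [Real.norm_eq_abs, Real.norm_eq_abs, abs_mul]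
      rw [e]
      refine h.trans ?_
      calc (∫ ω, ‖ξ₂ ω‖ ^ (2:ℝ) ∂P) ^ ((1:ℝ)/2) * (∫ ω, ‖η₂ ω‖ ^ (2:ℝ) ∂P) ^ ((1:ℝ)/2)
          ≤ T ^ ((1:ℝ)/2) * T ^ ((1:ℝ)/2) := by
            refine mul_le_mul ?_ ?_ (Real.rpow_nonneg (integral_nonneg fun ω => Real.rpow_nonneg (norm_nonneg _) _) _) (Real.rpow_nonneg hT0.le _)
            · refine Real.rpow_le_rpow (integral_nonneg fun ω => Real.rpow_nonneg (norm_nonneg _) _) ?_ (by norm_num)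
              simpa [Real.norm_eq_abs] using hSξ
            · refine Real.rpow_le_rpow (integral_nonneg fun ω => Real.rpow_nonneg (norm_nonneg _) _) ?_ (by norm_num)
              simpa [Real.norm_eq_abs] using hSη
        _ = T := hsqrtmul
    have hL1L2 : ∀ (f : Ω₀ → ℝ), Measurable f → MemLp f (ENNReal.ofReal 2) P →
        Integrable (fun ω => |f ω| ^ (2:ℝ)) P → (∫ ω, |f ω| ^ (2:ℝ) ∂P ≤ T) →
        ∫ ω, |f ω| ∂P ≤ T ^ ((1:ℝ)/2) := by
      intro f hfm hfL2 hfsq hfT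
      have h := integral_mul_norm_le_Lp_mul_Lq hconj hfL2
        (memLp_const (1:ℝ) (μ := P) (p := ENNReal.ofReal 2))
      simp only [norm_one, mul_one, Real.one_rpow] at h
      rw [integral_const, probReal_univ, smul_eq_mul, mul_one,
        Real.one_rpow, mul_one] at h
      have e : ∫ ω, |f ω| ∂P = ∫ ω, ‖f ω‖ ∂P := by
        simp [Real.norm_eq_abs]
      rw [e]
      refine h.trans ?_
      refine Real.rpow_le_rpow (integral_nonneg fun ω => Real.rpow_nonneg (norm_nonneg _) _) ?_ (by norm_num)
      simpa [Real.norm_eq_abs] using hfT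
    have hJξ : ∫ ω, |ξ₂ ω| ∂P ≤ T ^ ((1:ℝ)/2) := hL1L2 ξ₂ hξ₂m hξ₂L2 hξ₂sq hSξ
    have hJη : ∫ ω, |η₂ ω| ∂P ≤ T ^ ((1:ℝ)/2) := hL1L2 η₂ hη₂m hη₂L2 hη₂sq hSη
    -- mixing bound for the clipped variables
    have hm' : ∀ S U : Set ℝ, MeasurableSet S → MeasurableSet U →
        |(P (ξ₁ ⁻¹' S ∩ η₁ ⁻¹' U)).toReal
          - (P (ξ₁ ⁻¹' S)).toReal * (P (η₁ ⁻¹' U)).toReal| ≤ b := by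
      intro S U hS hU
      have h := hm (clip ⁻¹' S) (clip ⁻¹' U) (hclipm hS) (hclipm hU)
      rw [← Set.preimage_comp, ← Set.preimage_comp] at h
      exact le_trans h hab
    have B11 : |cov P ξ₁ η₁| ≤ 4 * M * M * b :=
      abs_cov_le_of_bdd P hm' hξ₁m hη₁m hM.le hM.le
        (fun ω => pclip (ξ ω)) (fun ω => pclip (η ω))
    -- bounds for the cross terms
    have hA1 : |∫ ω, ξ₁ ω ∂P| ≤ M := by
      refine (habs_le ξ₁).trans ?_
      calc ∫ ω, |ξ₁ ω| ∂P ≤ ∫ _, M ∂P :=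
            integral_mono hξ₁int.abs (integrable_const M) (fun ω => pclip (ξ ω))
        _ = M := by simp
    have hB1 : |∫ ω, η₁ ω ∂P| ≤ M := by
      refine (habs_le η₁).trans ?_
      calc ∫ ω, |η₁ ω| ∂P ≤ ∫ _, M ∂P :=
            integral_mono hη₁int.abs (integrable_const M) (fun ω => pclip (η ω))
        _ = M := by simp
    have hIabs12 : |∫ ω, ξ₁ ω * η₂ ω ∂P| ≤ M * (K ^ s * M ^ (1 - s)) := by
      refine (habs_le _).trans ?_
      calc ∫ ω, |ξ₁ ω * η₂ ω| ∂P ≤ ∫ ω, M * |η₂ ω| ∂P := by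
            refine integral_mono p12.abs (hη₂int.abs.const_mul M) (fun ω => ?_)
            rw [abs_mul]
            exact mul_le_mul_of_nonneg_right (pclip (ξ ω)) (abs_nonneg _)
        _ = M * ∫ ω, |η₂ ω| ∂P := integral_const_mul M _
        _ ≤ M * (K ^ s * M ^ (1 - s)) := mul_le_mul_of_nonneg_left hIη₂ hM.le
    have hIabs21 : |∫ ω, ξ₂ ω * η₁ ω ∂P| ≤ M * (K ^ s * M ^ (1 - s)) := by
      refine (habs_le _).trans ?_
      calc ∫ ω, |ξ₂ ω * η₁ ω| ∂P ≤ ∫ ω, M * |ξ₂ ω| ∂P := by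
            refine integral_mono p21.abs (hξ₂int.abs.const_mul M) (fun ω => ?_)
            rw [abs_mul, mul_comm]
            exact mul_le_mul_of_nonneg_right (pclip (η ω)) (abs_nonneg _)
        _ = M * ∫ ω, |ξ₂ ω| ∂P := integral_const_mul M _
        _ ≤ M * (K ^ s * M ^ (1 - s)) := mul_le_mul_of_nonneg_left hIξ₂ hM.le
    have hIabs22 : |∫ ω, ξ₂ ω * η₂ ω ∂P| ≤ T := (habs_le _).trans hCSξη
    -- decomposition of the covariance
    have decomp : cov P ξ η = cov P ξ₁ η₁
        + ((∫ ω, ξ₁ ω * η₂ ω ∂P) - (∫ ω, ξ₁ ω ∂P) * ∫ ω, η₂ ω ∂P)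
        + ((∫ ω, ξ₂ ω * η₁ ω ∂P) - (∫ ω, ξ₂ ω ∂P) * ∫ ω, η₁ ω ∂P)
        + ((∫ ω, ξ₂ ω * η₂ ω ∂P) - (∫ ω, ξ₂ ω ∂P) * ∫ ω, η₂ ω ∂P) := by
      rw [cov_def', cov_def', Exy, Eξ, Eη]
      ring
    have habsξ₂int : |∫ ω, ξ₂ ω ∂P| ≤ ∫ ω, |ξ₂ ω| ∂P := habs_le ξ₂
    have habsη₂int : |∫ ω, η₂ ω ∂P| ≤ ∫ ω, |η₂ ω| ∂P := habs_le η₂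
    -- combine
    have hMKs : M * (K ^ s * M ^ (1 - s)) = T := by
      rw [hTdef]
      have : M * M ^ (1 - s) = M ^ (2 - s) := by
        nth_rewrite 1 [← Real.rpow_one M]
        rw [← Real.rpow_add hM]
        congr 1
        ring
      calc M * (K ^ s * M ^ (1 - s)) = K ^ s * (M * M ^ (1 - s)) := by ring
        _ = K ^ s * M ^ (2 - s) := by rw [this]
    have total : |cov P ξ η| ≤ 4 * (M * M * b) + 6 * T := by
      rw [decomp]
      have t1 := abs_add_le (cov P ξ₁ η₁
        + ((∫ ω, ξ₁ ω * η₂ ω ∂P) - (∫ ω, ξ₁ ω ∂P) * ∫ ω, η₂ ω ∂P)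
        + ((∫ ω, ξ₂ ω * η₁ ω ∂P) - (∫ ω, ξ₂ ω ∂P) * ∫ ω, η₁ ω ∂P))
        ((∫ ω, ξ₂ ω * η₂ ω ∂P) - (∫ ω, ξ₂ ω ∂P) * ∫ ω, η₂ ω ∂P)
      have t2 := abs_add_le (cov P ξ₁ η₁
        + ((∫ ω, ξ₁ ω * η₂ ω ∂P) - (∫ ω, ξ₁ ω ∂P) * ∫ ω, η₂ ω ∂P))
        ((∫ ω, ξ₂ ω * η₁ ω ∂P) - (∫ ω, ξ₂ ω ∂P) * ∫ ω, η₁ ω ∂P)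
      have t3 := abs_add_le (cov P ξ₁ η₁)
        ((∫ ω, ξ₁ ω * η₂ ω ∂P) - (∫ ω, ξ₁ ω ∂P) * ∫ ω, η₂ ω ∂P)
      have u1 : |(∫ ω, ξ₁ ω * η₂ ω ∂P) - (∫ ω, ξ₁ ω ∂P) * ∫ ω, η₂ ω ∂P| ≤ 2 * T := by
        refine (abs_sub _ _).trans ?_
        have hprod : |(∫ ω, ξ₁ ω ∂P) * ∫ ω, η₂ ω ∂P| ≤ M * (K ^ s * M ^ (1 - s)) := by
          rw [abs_mul]
          refine mul_le_mul hA1 (habsη₂int.trans hIη₂) (abs_nonneg _) hM.le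
        rw [← hMKs]
        linarith [hIabs12, hprod]
      have u2 : |(∫ ω, ξ₂ ω * η₁ ω ∂P) - (∫ ω, ξ₂ ω ∂P) * ∫ ω, η₁ ω ∂P| ≤ 2 * T := by
        refine (abs_sub _ _).trans ?_
        have hprod : |(∫ ω, ξ₂ ω ∂P) * ∫ ω, η₁ ω ∂P| ≤ M * (K ^ s * M ^ (1 - s)) := by
          rw [abs_mul, mul_comm]
          refine mul_le_mul hB1 (habsξ₂int.trans hIξ₂) (abs_nonneg _) hM.le
        rw [← hMKs]
        linarith [hIabs21, hprod]
      have u3 : |(∫ ω, ξ₂ ω * η₂ ω ∂P) - (∫ ω, ξ₂ ω ∂P) * ∫ ω, η₂ ω ∂P| ≤ 2 * T := by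
        refine (abs_sub _ _).trans ?_
        have hprod : |(∫ ω, ξ₂ ω ∂P) * ∫ ω, η₂ ω ∂P| ≤ T := by
          rw [abs_mul, ← hsqrtmul]
          refine mul_le_mul (habsξ₂int.trans hJξ) (habsη₂int.trans hJη)
            (abs_nonneg _) (Real.rpow_nonneg hT0.le _)
        linarith [hIabs22, hprod]
      linarith [t1, t2, t3, B11, u1, u2, u3]
    -- final algebra
    have hMMb : M * M * b = K ^ 2 * b ^ (1 - 2 / s) := by
      have e1 : b ^ (-(1/s)) * b ^ (-(1/s)) * b ^ (1:ℝ) = b ^ (1 - 2/s) := by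
        rw [← Real.rpow_add hb, ← Real.rpow_add hb]
        congr 1
        ring
      calc M * M * b = (K * K) * (b ^ (-(1/s)) * b ^ (-(1/s)) * b ^ (1:ℝ)) := by
            rw [hMdef, Real.rpow_one]
            ring
        _ = K ^ 2 * b ^ (1 - 2/s) := by rw [e1, sq]
    have hTb : T = K ^ 2 * b ^ (1 - 2 / s) := by
      have e1 : M ^ (2 - s) = K ^ (2 - s) * b ^ ((-(1/s)) * (2 - s)) := by
        rw [hMdef, Real.mul_rpow hK.le (Real.rpow_nonneg hb.le _),
          ← Real.rpow_mul hb.le]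
      have e2 : K ^ s * K ^ (2 - s) = K ^ (2:ℝ) := by
        rw [← Real.rpow_add hK]
        congr 1
        ring
      have e3 : (-(1/s)) * (2 - s) = 1 - 2/s := by
        field_simp
        ring
      have e4 : K ^ (2:ℝ) = K ^ 2 := by
        rw [show (2:ℝ) = ((2:ℕ):ℝ) by norm_num, Real.rpow_natCast]
      rw [hTdef, e1, e3, ← e4, ← e2]
      ring
    rw [hMMb, hTb] at total
    calc |cov P ξ η| ≤ 4 * (K ^ 2 * b ^ (1 - 2/s)) + 6 * (K ^ 2 * b ^ (1 - 2/s)) := by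
          linarith [total]
      _ = 10 * K ^ 2 * b ^ (1 - 2/s) := by ring
  -- pass to the limit ε → 0⁺
  have hlim : Tendsto (fun ε : ℝ => 10 * K ^ 2 * (a + ε) ^ (1 - 2 / s))
      (𝓝[>] (0:ℝ)) (𝓝 (10 * K ^ 2 * a ^ (1 - 2 / s))) := by
    have h1 : Tendsto (fun ε : ℝ => a + ε) (𝓝[>] (0:ℝ)) (𝓝 a) := by
      have hc : Continuous (fun ε : ℝ => a + ε) := continuous_const.add continuous_id
      have := (hc.tendsto (0:ℝ)).mono_left (nhdsWithin_le_nhds (s := Set.Ioi (0:ℝ)))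
      simpa using this
    have h2 : ContinuousAt (fun x : ℝ => x ^ (1 - 2 / s)) a :=
      Real.continuousAt_rpow_const a _ (Or.inr hexp0)
    exact (h2.tendsto.comp h1).const_mul _
  refine ge_of_tendsto hlim ?_
  filter_upwards [eventually_mem_nhdsWithin] with ε hε
  exact main (a + ε) (by linarith [Set.mem_Ioi.1 hε]) (by linarith [Set.mem_Ioi.1 hε])


lemma cov_comm (P : Measure Ω₀) (f g : Ω₀ → ℝ) : cov P f g = cov P g f := by
  have h : ∫ ω, f ω * g ω ∂P = ∫ ω, g ω * f ω ∂P :=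
    integral_congr_ae (ae_of_all _ fun ω => mul_comm _ _)
  rw [cov_def', cov_def', h, mul_comm]

lemma integral_abs_rpow_le (P : Measure Ω₀) [IsProbabilityMeasure P]
    {f : Ω₀ → ℝ} {r C : ℝ} (hr : 0 < r) (hC : 0 ≤ C)
    (hf : MemLp f (ENNReal.ofReal r) P)
    (h : eLpNorm f (ENNReal.ofReal r) P ≤ ENNReal.ofReal C) :
    ∫ ω, |f ω| ^ r ∂P ≤ C ^ r := by
  have hr0 : ENNReal.ofReal r ≠ 0 := by
    simp [ENNReal.ofReal_eq_zero, not_le, hr]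
  have hrt : ENNReal.ofReal r ≠ ⊤ := ENNReal.ofReal_ne_top
  have htr : (ENNReal.ofReal r).toReal = r := ENNReal.toReal_ofReal hr.le
  -- express the integral through the lintegral
  have hlint : ∫ ω, |f ω| ^ r ∂P
      = (∫⁻ ω, (‖f ω‖₊ : ℝ≥0∞) ^ r ∂P).toReal := by
    rw [integral_eq_lintegral_of_nonneg_ae
      (ae_of_all _ fun ω => Real.rpow_nonneg (abs_nonneg _) _)
      (by
        have : (fun ω => |f ω| ^ r) = fun ω => ‖f ω‖ ^ (ENNReal.ofReal r).toReal := by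
          funext ω
          rw [Real.norm_eq_abs, htr]
        rw [this]
        exact (hf.integrable_norm_rpow hr0 hrt).aestronglyMeasurable)]
    congr 1
    refine lintegral_congr fun ω => ?_
    rw [← enorm_eq_nnnorm, ← ofReal_norm, Real.norm_eq_abs,
      ← ENNReal.ofReal_rpow_of_nonneg (abs_nonneg _) hr.le]
  have hsn : (∫⁻ ω, (‖f ω‖₊ : ℝ≥0∞) ^ r ∂P)
      = (eLpNorm f (ENNReal.ofReal r) P) ^ r := by
    rw [eLpNorm_eq_lintegral_rpow_enorm_toReal hr0 hrt]
    simp only [enorm_eq_nnnorm]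
    rw [htr, ← ENNReal.rpow_mul,
      one_div, inv_mul_cancel₀ hr.ne', ENNReal.rpow_one]
  rw [hlint, hsn]
  have hle : (eLpNorm f (ENNReal.ofReal r) P) ^ r ≤ ENNReal.ofReal (C ^ r) := by
    rw [← ENNReal.ofReal_rpow_of_nonneg hC hr.le]
    exact ENNReal.rpow_le_rpow h hr.le
  exact ENNReal.toReal_le_of_le_ofReal (Real.rpow_nonneg hC _) hle

end DavydovAux

open scoped ENNReal NNReal

/-- Lemma: covariance bound for squared block sums, α-mixing case. -/
theorem stmt13
    (P : Measure Ω) [IsProbabilityMeasure P]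
    (X : ℤ → Ω → ℝ) (hXmeas : ∀ i, Measurable (X i))
    (hstat : IsStrictlyStationary P X)
    (r : ℝ) (hr : 4 < r)
    (hmom : Integrable (fun ω => |X 0 ω| ^ r) P)
    (α : ℕ → ℝ) (hα0 : ∀ j, 0 ≤ α j)
    (hmix : IsAlphaMixingWith P X α) :
    ∃ c : ℝ, 0 < c ∧ ∀ (p q : ℕ), 1 ≤ p → 1 ≤ q → ∀ a b e f : ℤ,
      (Finset.Icc a b).card ≤ p → (Finset.Icc e f).card ≤ p →
      (∀ i ∈ Finset.Icc a b, ∀ j ∈ Finset.Icc e f, (q : ℤ) ≤ |i - j|) →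
      |cov P (fun ω => Gint P X p a b ω ^ 2) (fun ω => Gint P X p e f ω ^ 2)|
        ≤ c * (p : ℝ) ^ 2 * α q ^ ((r - 4) / r) := by
  classical
  have hr0 : (0:ℝ) < r := by linarith
  set pE := ENNReal.ofReal r with hpE
  have hpE0 : pE ≠ 0 := by simp [hpE, ENNReal.ofReal_eq_zero, not_le, hr0]
  have hpEt : pE ≠ ⊤ := ENNReal.ofReal_ne_top
  have hpE1 : (1:ℝ≥0∞) ≤ pE := by
    rw [hpE]
    exact ENNReal.one_le_ofReal.2 (by linarith)
  have hmeas_pi : ∀ k : ℤ, Measurable fun ω => fun i : ℤ => X (i + k) ω :=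
    fun k => measurable_pi_lambda _ fun i => hXmeas _
  have hmeas_pi0 : Measurable fun ω => fun i : ℤ => X i ω :=
    measurable_pi_lambda _ fun i => hXmeas i
  have hlaw : ∀ i : ℤ, Measure.map (X i) P = Measure.map (X 0) P := by
    intro i
    have h0 := congrArg (Measure.map (fun g : ℤ → ℝ => g 0)) (hstat i)
    rw [Measure.map_map (measurable_pi_apply 0) (hmeas_pi i),
      Measure.map_map (measurable_pi_apply 0) hmeas_pi0] at h0
    have e1 : ((fun g : ℤ → ℝ => g 0) ∘ fun ω => fun i' : ℤ => X (i' + i) ω)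
        = X i := by
      funext ω
      simp
    have e2 : ((fun g : ℤ → ℝ => g 0) ∘ fun ω => fun i' : ℤ => X i' ω) = X 0 := rfl
    rw [e1, e2] at h0
    exact h0
  have hX0mem : MemLp (X 0) pE P := by
    have h1 : MemLp (fun ω => ‖X 0 ω‖ ^ pE.toReal) (pE / pE) P := by
      rw [ENNReal.div_self hpE0 hpEt, memLp_one_iff_integrable]
      have e : (fun ω => ‖X 0 ω‖ ^ pE.toReal) = fun ω => |X 0 ω| ^ r := by
        funext ω
        rw [Real.norm_eq_abs, hpE, ENNReal.toReal_ofReal hr0.le]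
      rw [e]
      exact hmom
    exact (memLp_norm_rpow_iff (p := pE) (hXmeas 0).aestronglyMeasurable hpE0 hpEt).1 h1
  have hXeq : ∀ i : ℤ, eLpNorm (X i) pE P = eLpNorm (X 0) pE P := by
    intro i
    calc eLpNorm (X i) pE P
        = eLpNorm (id : ℝ → ℝ) pE (Measure.map (X i) P) :=
          (eLpNorm_map_measure aestronglyMeasurable_id (hXmeas i).aemeasurable).symm
      _ = eLpNorm (id : ℝ → ℝ) pE (Measure.map (X 0) P) := by rw [hlaw i]
      _ = eLpNorm (X 0) pE P :=
          eLpNorm_map_measure aestronglyMeasurable_id (hXmeas 0).aemeasurable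
  have hXimem : ∀ i : ℤ, MemLp (X i) pE P := by
    intro i
    refine ⟨(hXmeas i).aestronglyMeasurable, ?_⟩
    rw [hXeq i]
    exact hX0mem.2
  have hZmem : ∀ i : ℤ, MemLp (fun ω => X i ω - meanX P X) pE P :=
    fun i => (hXimem i).sub (memLp_const (meanX P X))
  set A : ℝ≥0∞ := eLpNorm (X 0) pE P + eLpNorm (fun _ : Ω => meanX P X) pE P with hAdef
  have hAtop : A ≠ ⊤ := by
    rw [hAdef]
    exact (ENNReal.add_lt_top.2 ⟨hX0mem.2, (memLp_const (meanX P X)).2⟩).ne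
  have hZnorm : ∀ i : ℤ, eLpNorm (fun ω => X i ω - meanX P X) pE P ≤ A := by
    intro i
    calc eLpNorm (fun ω => X i ω - meanX P X) pE P
        ≤ eLpNorm (X i) pE P + eLpNorm (fun _ : Ω => meanX P X) pE P :=
          eLpNorm_sub_le (hXmeas i).aestronglyMeasurable
            aestronglyMeasurable_const hpE1
      _ = A := by rw [hXeq i, hAdef]
  set KA : ℝ := A.toReal + 1 with hKAdef
  have hKA0 : (0:ℝ) < KA := by
    rw [hKAdef]
    positivity
  have hAle : A ≤ ENNReal.ofReal KA := by
    conv_lhs => rw [← ENNReal.ofReal_toReal hAtop]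
    exact ENNReal.ofReal_le_ofReal (by rw [hKAdef]; linarith)
  refine ⟨10 * KA ^ 4, by positivity, ?_⟩
  intro p q hp hq a b e f hcI hcJ hsep
  have hp0 : (0:ℝ) < p := by exact_mod_cast hp
  have hsqp : (0:ℝ) < Real.sqrt p := Real.sqrt_pos.2 hp0
  have hrhalf : (2:ℝ) < r / 2 := by linarith
  have hRHS0 : 0 ≤ 10 * KA ^ 4 * (p:ℝ) ^ 2 * α q ^ ((r - 4) / r) := by
    refine mul_nonneg (mul_nonneg (by positivity) (by positivity))
      (Real.rpow_nonneg (hα0 q) _)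
  -- moment facts for normalized block sums
  have hGfact : ∀ a' b' : ℤ, (Finset.Icc a' b').card ≤ p →
      Measurable (Gint P X p a' b') ∧
      Integrable (fun ω => |Gint P X p a' b' ω ^ 2| ^ (r / 2)) P ∧
      ∫ ω, |Gint P X p a' b' ω ^ 2| ^ (r / 2) ∂P ≤ ((p:ℝ) * KA ^ 2) ^ (r / 2) := by
    intro a' b' hcard
    have hGm : Measurable (Gint P X p a' b') := by
      show Measurable fun ω =>
        (∑ i ∈ Finset.Icc a' b', (X i ω - meanX P X)) / Real.sqrt p
      exact (Finset.measurable_sum _ fun i _ =>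
        (hXmeas i).sub measurable_const).div_const _
    have hsum : MemLp (fun ω => ∑ i ∈ Finset.Icc a' b', (X i ω - meanX P X)) pE P :=
      memLp_finset_sum _ fun i _ => hZmem i
    have e : Gint P X p a' b'
        = (Real.sqrt p)⁻¹ • fun ω => ∑ i ∈ Finset.Icc a' b', (X i ω - meanX P X) := by
      funext ω
      show (∑ i ∈ Finset.Icc a' b', (X i ω - meanX P X)) / Real.sqrt p = _
      rw [Pi.smul_apply, smul_eq_mul, div_eq_inv_mul]
    have hGmem : MemLp (Gint P X p a' b') pE P := by
      rw [e]
      exact hsum.const_smul _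
    have e2 : (fun ω => ∑ i ∈ Finset.Icc a' b', (X i ω - meanX P X))
        = ∑ i ∈ Finset.Icc a' b', (fun ω => X i ω - meanX P X) := by
      funext ω
      rw [Finset.sum_apply]
    have hGnorm : eLpNorm (Gint P X p a' b') pE P
        ≤ ENNReal.ofReal (Real.sqrt p * KA) := by
      have h1 : (‖(Real.sqrt p)⁻¹‖₊ : ℝ≥0∞) = ENNReal.ofReal ((Real.sqrt p)⁻¹) := by
        rw [← enorm_eq_nnnorm, ← ofReal_norm, Real.norm_eq_abs,
          abs_of_nonneg (by positivity)]
      have h2 : ((p:ℕ) : ℝ≥0∞) = ENNReal.ofReal (p:ℝ) := (ENNReal.ofReal_natCast p).symm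
      calc eLpNorm (Gint P X p a' b') pE P
          = (‖(Real.sqrt p)⁻¹‖₊ : ℝ≥0∞) * eLpNorm
              (fun ω => ∑ i ∈ Finset.Icc a' b', (X i ω - meanX P X)) pE P := by
            rw [e, eLpNorm_const_smul, enorm_eq_nnnorm]
        _ ≤ (‖(Real.sqrt p)⁻¹‖₊ : ℝ≥0∞) * ((p : ℝ≥0∞) * ENNReal.ofReal KA) := by
            refine mul_le_mul_right ?_ _
            calc eLpNorm (fun ω => ∑ i ∈ Finset.Icc a' b', (X i ω - meanX P X)) pE P
                = eLpNorm (∑ i ∈ Finset.Icc a' b',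
                    fun ω => X i ω - meanX P X) pE P := by rw [e2]
              _ ≤ ∑ i ∈ Finset.Icc a' b',
                    eLpNorm (fun ω => X i ω - meanX P X) pE P :=
                  eLpNorm_sum_le (fun i _ =>
                    ((hXmeas i).sub measurable_const).aestronglyMeasurable) hpE1
              _ ≤ ∑ _i ∈ Finset.Icc a' b', A := Finset.sum_le_sum fun i _ => hZnorm i
              _ = (Finset.Icc a' b').card • A := by rw [Finset.sum_const]
              _ = ((Finset.Icc a' b').card : ℝ≥0∞) * A := by rw [nsmul_eq_mul]
              _ ≤ (p : ℝ≥0∞) * ENNReal.ofReal KA :=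
                  mul_le_mul' (by exact_mod_cast Nat.cast_le.2 hcard) hAle
        _ = ENNReal.ofReal (Real.sqrt p * KA) := by
            rw [h1, h2, ← ENNReal.ofReal_mul (by positivity),
              ← ENNReal.ofReal_mul (by positivity)]
            congr 1
            have hps : Real.sqrt p * Real.sqrt p = (p:ℝ) := Real.mul_self_sqrt hp0.le
            calc (Real.sqrt p)⁻¹ * ((p:ℝ) * KA)
                = (Real.sqrt p)⁻¹ * (Real.sqrt p * Real.sqrt p * KA) := by rw [hps]
              _ = ((Real.sqrt p)⁻¹ * Real.sqrt p) * (Real.sqrt p * KA) := by ring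
              _ = Real.sqrt p * KA := by rw [inv_mul_cancel₀ hsqp.ne', one_mul]
    have hint1 : Integrable (fun ω => |Gint P X p a' b' ω| ^ r) P := by
      have h := hGmem.integrable_norm_rpow hpE0 hpEt
      have e3 : (fun ω => ‖Gint P X p a' b' ω‖ ^ pE.toReal)
          = fun ω => |Gint P X p a' b' ω| ^ r := by
        funext ω
        rw [Real.norm_eq_abs, hpE, ENNReal.toReal_ofReal hr0.le]
      rwa [e3] at h
    have hmom1 : ∫ ω, |Gint P X p a' b' ω| ^ r ∂P ≤ (Real.sqrt p * KA) ^ r := by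
      refine integral_abs_rpow_le P hr0 (by positivity) ?_ ?_
      · rw [← hpE]; exact hGmem
      · rw [← hpE]; exact hGnorm
    have habs2 : (fun ω => |Gint P X p a' b' ω ^ 2| ^ (r/2))
        = fun ω => |Gint P X p a' b' ω| ^ r := by
      funext ω
      rw [abs_pow, ← Real.rpow_natCast (|Gint P X p a' b' ω|) 2,
        ← Real.rpow_mul (abs_nonneg _)]
      congr 1
      push_cast
      ring
    have hK2 : ((p:ℝ) * KA ^ 2) ^ (r/2) = (Real.sqrt p * KA) ^ r := by
      rw [show (p:ℝ) * KA^2 = (Real.sqrt p * KA)^2 by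
            rw [mul_pow, Real.sq_sqrt hp0.le],
        ← Real.rpow_natCast (Real.sqrt p * KA) 2, ← Real.rpow_mul (by positivity)]
      congr 1
      push_cast
      ring
    refine ⟨hGm, ?_, ?_⟩
    · rw [habs2]; exact hint1
    · rw [habs2, hK2]; exact hmom1
  -- main case: the first interval lies to the left of the second
  have key : ∀ a' b' e' f' : ℤ, (Finset.Icc a' b').card ≤ p →
      (Finset.Icc e' f').card ≤ p → b' + (q:ℤ) ≤ e' →
      |cov P (fun ω => Gint P X p a' b' ω ^ 2) (fun ω => Gint P X p e' f' ω ^ 2)|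
        ≤ 10 * KA ^ 4 * (p:ℝ) ^ 2 * α q ^ ((r - 4) / r) := by
    intro a' b' e' f' hc1 hc2 hord
    obtain ⟨hGm1, hGi1, hGK1⟩ := hGfact a' b' hc1
    obtain ⟨hGm2, hGi2, hGK2⟩ := hGfact e' f' hc2
    have hmeasA : Measurable[⨆ i ∈ {i : ℤ | i ≤ b'},
        MeasurableSpace.comap (X i) (borel ℝ)] (fun ω => Gint P X p a' b' ω ^ 2) := by
      have hXA : ∀ i : ℤ, i ≤ b' → Measurable[⨆ i ∈ {i : ℤ | i ≤ b'},
          MeasurableSpace.comap (X i) (borel ℝ)] (X i) := by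
        intro i hi
        refine measurable_iff_comap_le.2 ?_
        exact le_iSup₂ (f := fun (i : ℤ) (_ : i ∈ {i : ℤ | i ≤ b'}) =>
          MeasurableSpace.comap (X i) (borel ℝ)) i hi
      refine Measurable.pow_const ?_ 2
      show Measurable[⨆ i ∈ {i : ℤ | i ≤ b'}, MeasurableSpace.comap (X i) (borel ℝ)]
        fun ω => (∑ i ∈ Finset.Icc a' b', (X i ω - meanX P X)) / Real.sqrt p
      exact (Finset.measurable_sum _ fun i hi =>
        (hXA i (Finset.mem_Icc.1 hi).2).sub measurable_const).div_const _
    have hmeasB : Measurable[⨆ i ∈ {i : ℤ | b' + (q:ℤ) ≤ i},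
        MeasurableSpace.comap (X i) (borel ℝ)] (fun ω => Gint P X p e' f' ω ^ 2) := by
      have hXB : ∀ i : ℤ, b' + (q:ℤ) ≤ i → Measurable[⨆ i ∈ {i : ℤ | b' + (q:ℤ) ≤ i},
          MeasurableSpace.comap (X i) (borel ℝ)] (X i) := by
        intro i hi
        refine measurable_iff_comap_le.2 ?_
        exact le_iSup₂ (f := fun (i : ℤ) (_ : i ∈ {i : ℤ | b' + (q:ℤ) ≤ i}) =>
          MeasurableSpace.comap (X i) (borel ℝ)) i hi
      refine Measurable.pow_const ?_ 2
      show Measurable[⨆ i ∈ {i : ℤ | b' + (q:ℤ) ≤ i}, MeasurableSpace.comap (X i) (borel ℝ)]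
        fun ω => (∑ i ∈ Finset.Icc e' f', (X i ω - meanX P X)) / Real.sqrt p
      refine Measurable.div_const (Finset.measurable_sum _ fun i hi => ?_) _
      refine (hXB i ?_).sub measurable_const
      exact le_trans hord (Finset.mem_Icc.1 hi).1
    have hmcov : ∀ S T : Set ℝ, MeasurableSet S → MeasurableSet T →
        |(P ((fun ω => Gint P X p a' b' ω ^ 2) ⁻¹' S
            ∩ (fun ω => Gint P X p e' f' ω ^ 2) ⁻¹' T)).toReal
          - (P ((fun ω => Gint P X p a' b' ω ^ 2) ⁻¹' S)).toReal
            * (P ((fun ω => Gint P X p e' f' ω ^ 2) ⁻¹' T)).toReal| ≤ α q :=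
      fun S T hS hT => hmix q hq b' _ _ (hmeasA hS) (hmeasB hT)
    have hd := davydov_cov_bound P (hα0 q) hmcov (hGm1.pow_const 2) (hGm2.pow_const 2)
      hrhalf (K := (p:ℝ) * KA ^ 2) (by positivity) hGi1 hGi2 hGK1 hGK2
    have hexp : 1 - 2 / (r/2) = (r - 4) / r := by
      field_simp
      norm_num
    calc |cov P (fun ω => Gint P X p a' b' ω ^ 2) (fun ω => Gint P X p e' f' ω ^ 2)|
        ≤ 10 * ((p:ℝ) * KA ^ 2) ^ 2 * α q ^ (1 - 2 / (r/2)) := hd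
      _ = 10 * KA ^ 4 * (p:ℝ) ^ 2 * α q ^ ((r - 4) / r) := by
          rw [hexp]
          ring
  -- dispatch the degenerate and symmetric cases
  rcases Finset.eq_empty_or_nonempty (Finset.Icc a b) with hI | hI
  · have hG0 : (fun ω => Gint P X p a b ω ^ 2) = fun _ : Ω => (0:ℝ) := by
      funext ω
      show ((∑ i ∈ Finset.Icc a b, (X i ω - meanX P X)) / Real.sqrt p) ^ 2 = 0
      rw [hI, Finset.sum_empty, zero_div]
      norm_num
    rw [hG0]
    have : cov P (fun _ : Ω => (0:ℝ)) (fun ω => Gint P X p e f ω ^ 2) = 0 := by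
      rw [cov_def']
      simp
    rw [this, abs_zero]
    exact hRHS0
  rcases Finset.eq_empty_or_nonempty (Finset.Icc e f) with hJ | hJ
  · have hG0 : (fun ω => Gint P X p e f ω ^ 2) = fun _ : Ω => (0:ℝ) := by
      funext ω
      show ((∑ i ∈ Finset.Icc e f, (X i ω - meanX P X)) / Real.sqrt p) ^ 2 = 0
      rw [hJ, Finset.sum_empty, zero_div]
      norm_num
    rw [hG0]
    have : cov P (fun ω => Gint P X p a b ω ^ 2) (fun _ : Ω => (0:ℝ)) = 0 := by
      rw [cov_def']
      simp
    rw [this, abs_zero]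
    exact hRHS0
  have hab : a ≤ b := Finset.nonempty_Icc.1 hI
  have hef : e ≤ f := Finset.nonempty_Icc.1 hJ
  have hq1 : (1:ℤ) ≤ (q:ℤ) := by exact_mod_cast hq
  by_cases hbe : b + (q:ℤ) ≤ e
  · exact key a b e f hcI hcJ hbe
  · have hfa : f + (q:ℤ) ≤ a := by
      by_contra hcon
      push_neg at hcon
      push_neg at hbe
      -- from the separation hypothesis applied to (b, e) and (a, f)
      have h1 := hsep b (Finset.mem_Icc.2 ⟨hab, le_refl b⟩)
        e (Finset.mem_Icc.2 ⟨le_refl e, hef⟩)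
      have h2 := hsep a (Finset.mem_Icc.2 ⟨le_refl a, hab⟩)
        f (Finset.mem_Icc.2 ⟨hef, le_refl f⟩)
      have hb1 : e + (q:ℤ) ≤ b := by
        rcases abs_cases (b - e) with ⟨habs, _⟩ | ⟨habs, _⟩
        · rw [habs] at h1; linarith
        · rw [habs] at h1; linarith
      have hb2 : a + (q:ℤ) ≤ f := by
        rcases abs_cases (a - f) with ⟨habs, _⟩ | ⟨habs, _⟩
        · rw [habs] at h2; linarith
        · rw [habs] at h2; linarith
      have hmem1 : max a e ∈ Finset.Icc a b :=
        Finset.mem_Icc.2 ⟨le_max_left _ _, max_le hab (by linarith)⟩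
      have hmem2 : max a e ∈ Finset.Icc e f :=
        Finset.mem_Icc.2 ⟨le_max_right _ _, max_le (by linarith) hef⟩
      have := hsep (max a e) hmem1 (max a e) hmem2
      simp at this
      omega
    rw [cov_comm]
    exact key e f a b hcJ hcI hfa
end
end
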